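/- arXiv:1903.06868 — 5 statements merged into one kernel-verified Lean document; each statement's English description precedes it below -/
import Mathlib

section
/- Let κ ∈ ℤ and let m be a positive integer. Define F : ℍ → ℂ by F(z) := 𝐖_κ(2πm·Im z) · e^{2πimz}. Then for every z = x+iy ∈ ℍ one has 2i y^κ · conj( (1/2)(∂F/∂x + i ∂F/∂y)(z) ) = (2πm)^{1−κ} · W_{2−κ}(−2πm y) · e^{−2πimz}. -/
open MeasureTheory Complex

/-- `W_κ(w) := (−2w)^{1−κ} ∫₁^∞ e^{2wt} t^{−κ} dt` (convergent for `w < 0`). -/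
noncomputable def Wfun (κ : ℤ) (w : ℝ) : ℝ :=
  (-2 * w) ^ (1 - κ) * ∫ t in Set.Ioi (1 : ℝ), Real.exp (2 * w * t) * t ^ (-κ)

/-- `𝐖_κ(w) := −∫_w^∞ W_{2−κ}(−t) t^{−κ} e^{2t} dt` (convergent for `w > 0`). -/
noncomputable def bWfun (κ : ℤ) (w : ℝ) : ℝ :=
  -∫ t in Set.Ioi w, Wfun (2 - κ) (-t) * t ^ (-κ) * Real.exp (2 * t)

open Set Filter Topology

-- boundedness of s^n * exp(-(a*(s-1))) on [1, ∞)
lemma bdd_zpow_exp (n : ℤ) {a : ℝ} (ha : 0 < a) :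
    ∃ C : ℝ, 0 < C ∧ ∀ s : ℝ, 1 ≤ s → s ^ n * Real.exp (-(a * (s - 1))) ≤ C := by
  have h0 : Filter.Tendsto (fun s : ℝ => Real.exp a * (s ^ (n : ℝ) * Real.exp (-a * s)))
      atTop (𝓝 0) := by
    simpa using (tendsto_rpow_mul_exp_neg_mul_atTop_nhds_zero (n : ℝ) a ha).const_mul
      (Real.exp a)
  have h1 : Filter.Tendsto (fun s : ℝ => s ^ n * Real.exp (-(a * (s - 1))))
      atTop (𝓝 0) := by
    apply h0.congr'
    filter_upwards [eventually_ge_atTop (1 : ℝ)] with s hs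
    rw [← Real.rpow_intCast s n]
    rw [show -(a * (s - 1)) = a + -a * s by ring, Real.exp_add]
    ring
  obtain ⟨M, hM⟩ := (h1.eventually (eventually_le_nhds zero_lt_one)).exists_forall_of_atTop
  have hcont : ContinuousOn (fun s : ℝ => s ^ n * Real.exp (-(a * (s - 1)))) (Icc 1 M) := by
    apply ContinuousOn.mul
    · intro s hs
      exact (continuousAt_zpow₀ _ _ (Or.inl (by linarith [hs.1]))).continuousWithinAt
    · exact (Real.continuous_exp.comp (by continuity)).continuousOn
  obtain ⟨C0, hC0⟩ := isCompact_Icc.exists_bound_of_continuousOn hcont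
  refine ⟨max C0 1 + 1, by positivity, fun s hs => ?_⟩
  rcases le_or_gt s M with h | h
  · have := hC0 s ⟨hs, h⟩
    have : s ^ n * Real.exp (-(a * (s - 1))) ≤ C0 := by
      calc _ ≤ ‖s ^ n * Real.exp (-(a * (s - 1)))‖ := Real.le_norm_self _
        _ ≤ C0 := this
    calc _ ≤ C0 := this
      _ ≤ max C0 1 + 1 := by linarith [le_max_left C0 1]
  · have := hM s h.le
    calc _ ≤ (1:ℝ) := this
      _ ≤ max C0 1 + 1 := by linarith [le_max_right C0 1]

lemma key_ptwise (n : ℤ) {a t s C : ℝ} (ha : 0 < a) (hat : a ≤ t) (hs : 1 ≤ s)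
    (hC : ∀ u : ℝ, 1 ≤ u → u ^ n * Real.exp (-(a * (u - 1))) ≤ C) :
    Real.exp (2 * -t * s) * s ^ n ≤ C * (Real.exp (-(2 * t)) * Real.exp (-(t * (s - 1)))) := by
  have h1 : Real.exp (2 * -t * s)
      = Real.exp (-(2*t)) * Real.exp (-(t*(s-1))) * Real.exp (-(t*(s-1))) := by
    rw [← Real.exp_add, ← Real.exp_add]; ring_nf
  rw [h1]
  have h2 : Real.exp (-(t*(s-1))) * s ^ n ≤ C := by
    calc Real.exp (-(t*(s-1))) * s ^ n ≤ Real.exp (-(a*(s-1))) * s ^ n := by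
          apply mul_le_mul_of_nonneg_right (Real.exp_le_exp.2 (by nlinarith)) ?_
          positivity
      _ ≤ C := by rw [mul_comm]; exact hC s hs
  calc Real.exp (-(2*t)) * Real.exp (-(t*(s-1))) * Real.exp (-(t*(s-1))) * s ^ n
      = (Real.exp (-(2*t)) * Real.exp (-(t*(s-1)))) * (Real.exp (-(t*(s-1))) * s ^ n) := by ring
    _ ≤ (Real.exp (-(2*t)) * Real.exp (-(t*(s-1)))) * C := by
        apply mul_le_mul_of_nonneg_left h2; positivity
    _ = C * (Real.exp (-(2 * t)) * Real.exp (-(t * (s - 1)))) := by ring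

lemma exp_shift_integrable {t : ℝ} (ht : 0 < t) :
    IntegrableOn (fun s : ℝ => Real.exp (-(t * (s - 1)))) (Ioi 1) := by
  have : IntegrableOn (fun s : ℝ => Real.exp t * Real.exp (-t * s)) (Ioi 1) :=
    (exp_neg_integrableOn_Ioi 1 ht).const_mul _
  apply this.congr_fun (fun s _ => ?_) measurableSet_Ioi
  rw [← Real.exp_add]; ring_nf

lemma exp_shift_integral {t : ℝ} (ht : 0 < t) :
    ∫ s in Ioi (1:ℝ), Real.exp (-(t * (s - 1))) = 1 / t := by
  have h1 : ∀ s : ℝ, Real.exp (-(t * (s - 1))) = Real.exp t * Real.exp (-(t * s)) := by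
    intro s; rw [← Real.exp_add]; ring_nf
  simp_rw [h1]
  rw [integral_const_mul]
  have := integral_comp_mul_left_Ioi (fun u : ℝ => Real.exp (-u)) 1 ht
  simp only [smul_eq_mul, mul_one] at this
  rw [show (∫ s in Ioi (1:ℝ), Real.exp (-(t * s))) = ∫ s in Ioi (1:ℝ), (fun u => Real.exp (-u)) (t * s) from rfl]
  rw [this, integral_exp_neg_Ioi]
  rw [show Real.exp t * (t⁻¹ * Real.exp (-t)) = (Real.exp t * Real.exp (-t)) * t⁻¹ by ring,
    ← Real.exp_add]
  simp [one_div]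

noncomputable def Jfun (n : ℤ) (t : ℝ) : ℝ :=
  ∫ s in Ioi (1:ℝ), Real.exp (2 * -t * s) * s ^ n

noncomputable def gfun (κ : ℤ) (t : ℝ) : ℝ :=
  Wfun (2 - κ) (-t) * t ^ (-κ) * Real.exp (2 * t)

lemma inner_cont (n : ℤ) (t : ℝ) :
    ContinuousOn (fun s : ℝ => Real.exp (2 * -t * s) * s ^ n) (Ioi 1) := by
  apply ContinuousOn.mul
  · exact (Real.continuous_exp.comp (by continuity)).continuousOn
  · intro s hs
    exact (continuousAt_zpow₀ _ _ (Or.inl (by simp at hs; linarith))).continuousWithinAt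

lemma inner_nonneg (n : ℤ) (t : ℝ) {s : ℝ} (hs : s ∈ Ioi (1:ℝ)) :
    0 ≤ Real.exp (2 * -t * s) * s ^ n := by
  simp only [mem_Ioi] at hs
  have : (0:ℝ) < s := by linarith
  positivity

lemma inner_integrable (n : ℤ) {t : ℝ} (ht : 0 < t) :
    IntegrableOn (fun s : ℝ => Real.exp (2 * -t * s) * s ^ n) (Ioi 1) := by
  obtain ⟨C, hCpos, hC⟩ := bdd_zpow_exp n ht
  have hmaj : IntegrableOn (fun s : ℝ => C * Real.exp (-(2*t)) * Real.exp (-(t * (s - 1)))) (Ioi 1) :=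
    (exp_shift_integrable ht).const_mul _
  apply hmaj.mono' ((inner_cont n t).aestronglyMeasurable measurableSet_Ioi)
  filter_upwards [ae_restrict_mem measurableSet_Ioi] with s hs
  rw [Real.norm_eq_abs, _root_.abs_of_nonneg (inner_nonneg n t hs)]
  have := key_ptwise n ht le_rfl (le_of_lt hs) hC
  linarith [this]

lemma Jfun_le (n : ℤ) {a t C : ℝ} (ha : 0 < a) (hat : a ≤ t) (hCpos : 0 < C)
    (hC : ∀ u : ℝ, 1 ≤ u → u ^ n * Real.exp (-(a * (u - 1))) ≤ C) :
    Jfun n t ≤ C * Real.exp (-(2*t)) * (1/t) := by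
  have ht : 0 < t := lt_of_lt_of_le ha hat
  have hmaj : IntegrableOn (fun s : ℝ => C * Real.exp (-(2*t)) * Real.exp (-(t * (s - 1)))) (Ioi 1) :=
    (exp_shift_integrable ht).const_mul _
  have h1 : Jfun n t ≤ ∫ s in Ioi (1:ℝ), C * Real.exp (-(2*t)) * Real.exp (-(t * (s - 1))) := by
    apply setIntegral_mono_on (inner_integrable n ht) hmaj measurableSet_Ioi
    intro s hs
    have := key_ptwise n ha hat (le_of_lt hs) hC
    linarith
  calc Jfun n t ≤ _ := h1
    _ = C * Real.exp (-(2*t)) * (1/t) := by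
        rw [integral_const_mul, exp_shift_integral ht]

lemma Jfun_nonneg (n : ℤ) (t : ℝ) : 0 ≤ Jfun n t :=
  setIntegral_nonneg measurableSet_Ioi fun s hs => inner_nonneg n t hs

lemma Jfun_cont (n : ℤ) {t₀ : ℝ} (ht₀ : 0 < t₀) : ContinuousAt (Jfun n) t₀ := by
  obtain ⟨C, hCpos, hC⟩ := bdd_zpow_exp n (half_pos ht₀)
  apply continuousAt_of_dominated (bound := fun s =>
    C * (Real.exp (-(2*(t₀/2))) * Real.exp (-((t₀/2) * (s - 1)))))
  · filter_upwards with t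
    exact ((inner_cont n t).aestronglyMeasurable measurableSet_Ioi)
  · filter_upwards [eventually_gt_nhds (half_lt_self ht₀)] with t ht
    filter_upwards [ae_restrict_mem measurableSet_Ioi] with s hs
    rw [Real.norm_eq_abs, _root_.abs_of_nonneg (inner_nonneg n t hs)]
    calc Real.exp (2 * -t * s) * s ^ n
        ≤ C * (Real.exp (-(2*t)) * Real.exp (-(t * (s - 1)))) :=
          key_ptwise n (half_pos ht₀) ht.le (le_of_lt hs) hC
      _ ≤ C * (Real.exp (-(2*(t₀/2))) * Real.exp (-((t₀/2) * (s - 1)))) := by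
          have hs1 : (1:ℝ) ≤ s := le_of_lt hs
          gcongr <;> nlinarith
  · have hmaj : IntegrableOn (fun s : ℝ =>
        (C * Real.exp (-(2*(t₀/2)))) * Real.exp (-((t₀/2) * (s - 1)))) (Ioi 1) :=
      (exp_shift_integrable (half_pos ht₀)).const_mul _
    exact hmaj.congr_fun (fun s _ => by ring) measurableSet_Ioi
  · filter_upwards [ae_restrict_mem measurableSet_Ioi] with s hs
    exact (Real.continuous_exp.comp (by continuity)).continuousAt.mul continuousAt_const

lemma Wfun_eq (κ : ℤ) (t : ℝ) : Wfun (2 - κ) (-t) = (2*t) ^ (κ - 1) * Jfun (κ - 2) t := by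
  unfold Wfun Jfun
  rw [show (-2 : ℝ) * -t = 2 * t by ring, show 1 - (2 - κ) = κ - 1 by ring,
    show -(2 - κ) = κ - 2 by ring]

lemma gfun_cont (κ : ℤ) {t₀ : ℝ} (ht₀ : 0 < t₀) : ContinuousAt (gfun κ) t₀ := by
  have h2t : ContinuousAt (fun t : ℝ => (2*t) ^ (κ - 1)) t₀ := by
    apply ContinuousAt.comp (g := fun u : ℝ => u ^ (κ - 1))
    · exact continuousAt_zpow₀ _ _ (Or.inl (by positivity))
    · exact (continuous_const.mul continuous_id).continuousAt
  have hW : ContinuousAt (fun t => Wfun (2 - κ) (-t)) t₀ := by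
    have := h2t.mul (Jfun_cont (κ - 2) ht₀)
    apply this.congr
    filter_upwards with t using (Wfun_eq κ t).symm
  have hz : ContinuousAt (fun t : ℝ => t ^ (-κ)) t₀ :=
    continuousAt_zpow₀ _ _ (Or.inl (ne_of_gt ht₀))
  exact (hW.mul hz).mul (Real.continuous_exp.comp (by continuity)).continuousAt

lemma gfun_nonneg (κ : ℤ) {t : ℝ} (ht : 0 < t) : 0 ≤ gfun κ t := by
  unfold gfun
  rw [Wfun_eq]
  have := Jfun_nonneg (κ - 2) t
  positivity

lemma gfun_le (κ : ℤ) {a t C : ℝ} (ha : 0 < a) (hat : a ≤ t) (hCpos : 0 < C)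
    (hC : ∀ u : ℝ, 1 ≤ u → u ^ (κ - 2) * Real.exp (-(a * (u - 1))) ≤ C) :
    gfun κ t ≤ C * 2 ^ (κ - 1) * t ^ (-2 : ℝ) := by
  have ht : 0 < t := lt_of_lt_of_le ha hat
  have hJ := Jfun_le (κ - 2) ha hat hCpos hC
  have hJ0 := Jfun_nonneg (κ - 2) t
  unfold gfun
  rw [Wfun_eq]
  have key : (2*t) ^ (κ - 1) * (C * Real.exp (-(2*t)) * (1/t)) * t ^ (-κ) * Real.exp (2*t)
      = C * 2 ^ (κ - 1) * t ^ (-2 : ℝ) := by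
    rw [mul_zpow]
    have h1 : t ^ (κ - 1) * (1/t) * t ^ (-κ) = t ^ (-2 : ℝ) := by
      rw [one_div, ← zpow_neg_one t, ← zpow_add₀ (ne_of_gt ht), ← zpow_add₀ (ne_of_gt ht),
        show κ - 1 + -1 + -κ = -2 by ring, ← Real.rpow_intCast t (-2)]
      norm_num
    calc 2 ^ (κ - 1) * t ^ (κ - 1) * (C * Real.exp (-(2*t)) * (1/t)) * t ^ (-κ) * Real.exp (2*t)
        = C * 2 ^ (κ - 1) * (t ^ (κ - 1) * (1/t) * t ^ (-κ)) * (Real.exp (-(2*t) + 2*t)) := by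
          rw [Real.exp_add]; ring
      _ = C * 2 ^ (κ - 1) * t ^ (-2 : ℝ) := by rw [h1]; norm_num
  rw [← key]
  have h2tpos : (0:ℝ) < (2*t) ^ (κ - 1) := by positivity
  have htk : (0:ℝ) < t ^ (-κ) := by positivity
  have hexp : (0:ℝ) < Real.exp (2*t) := Real.exp_pos _
  gcongr

lemma gfun_integrableOn (κ : ℤ) {a : ℝ} (ha : 0 < a) :
    IntegrableOn (gfun κ) (Ioi a) := by
  obtain ⟨C, hCpos, hC⟩ := bdd_zpow_exp (κ - 2) ha
  have hmaj : IntegrableOn (fun t : ℝ => C * 2 ^ (κ - 1) * t ^ (-2:ℝ)) (Ioi a) :=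
    (integrableOn_Ioi_rpow_of_lt (by norm_num) ha).const_mul _
  apply hmaj.mono'
  · apply ContinuousOn.aestronglyMeasurable ?_ measurableSet_Ioi
    intro t htmem
    exact (gfun_cont κ (lt_trans ha htmem)).continuousWithinAt
  · filter_upwards [ae_restrict_mem measurableSet_Ioi] with t htmem
    rw [Real.norm_eq_abs, _root_.abs_of_nonneg (gfun_nonneg κ (lt_trans ha htmem))]
    exact gfun_le κ ha (le_of_lt htmem) hCpos hC

lemma hasDerivAt_bWfun (κ : ℤ) {w : ℝ} (hw : 0 < w) :
    HasDerivAt (bWfun κ) (gfun κ w) w := by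
  set a := w / 2 with ha_def
  have ha : 0 < a := half_pos hw
  have haw : a < w := half_lt_self hw
  have hint := gfun_integrableOn κ ha
  have hsplit : ∀ u : ℝ, a < u →
      bWfun κ u = (∫ t in a..u, gfun κ t) - ∫ t in Ioi a, gfun κ t := by
    intro u hu
    have hunion : Ioc a u ∪ Ioi u = Ioi a := Ioc_union_Ioi_eq_Ioi hu.le
    have hdisj : Disjoint (Ioc a u) (Ioi u) := by
      apply Ioc_disjoint_Ioi le_rfl
    have := setIntegral_union hdisj measurableSet_Ioi
      (hint.mono_set (by rw [← hunion]; exact subset_union_left))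
      (hint.mono_set (by rw [← hunion]; exact subset_union_right)) (f := gfun κ)
    rw [hunion] at this
    rw [bWfun, intervalIntegral.integral_of_le hu.le]
    have : (∫ t in Ioi u, gfun κ t)
        = (∫ t in Ioi a, gfun κ t) - ∫ t in Ioc a u, gfun κ t := by
      rw [this]; ring
    rw [show (∫ t in Set.Ioi u, Wfun (2 - κ) (-t) * t ^ (-κ) * Real.exp (2 * t))
        = ∫ t in Ioi u, gfun κ t from rfl, this]
    ring
  have hd : HasDerivAt (fun u => ∫ t in a..u, gfun κ t) (gfun κ w) w := by
    apply intervalIntegral.integral_hasDerivAt_right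
    · rw [intervalIntegrable_iff_integrableOn_Ioc_of_le haw.le]
      exact hint.mono_set Ioc_subset_Ioi_self
    · exact ⟨Ioi a, Ioi_mem_nhds haw, (ContinuousOn.aestronglyMeasurable (fun t htmem =>
        (gfun_cont κ (lt_trans ha htmem)).continuousWithinAt) measurableSet_Ioi)⟩
    · exact gfun_cont κ hw
  have hd2 : HasDerivAt (fun u => (∫ t in a..u, gfun κ t) - ∫ t in Ioi a, gfun κ t)
      (gfun κ w) w := hd.sub_const _
  apply hd2.congr_of_eventuallyEq
  filter_upwards [eventually_gt_nhds haw] with u hu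
  exact hsplit u hu

/-- For `κ ∈ ℤ`, `m > 0`, the function `F(z) = 𝐖_κ(2πm·Im z)·e^{2πimz}` satisfies
`ξ_κ(F)(z) = (2πm)^{1−κ} W_{2−κ}(−2πm y) e^{−2πimz}`, where
`ξ_κ = 2i y^κ conj((1/2)(∂/∂x + i ∂/∂y))`. -/
theorem xi_bW_qm (κ m : ℤ) (hm : 0 < m) (F : ℂ → ℂ)
    (hF : ∀ z : ℂ, F z =
      (bWfun κ (2 * Real.pi * m * z.im) : ℂ) * Complex.exp (2 * Real.pi * Complex.I * m * z))
    (z : ℂ) (hz : 0 < z.im) :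
    2 * Complex.I * (z.im : ℂ) ^ κ *
        (starRingEnd ℂ) ((1 / 2) * (fderiv ℝ F z 1 + Complex.I * fderiv ℝ F z Complex.I)) =
      (((2 * Real.pi * m) ^ (1 - κ) : ℝ) : ℂ) * (Wfun (2 - κ) (-(2 * Real.pi * m * z.im)) : ℂ) *
        Complex.exp (-2 * Real.pi * Complex.I * m * z) := by
  have hFfun : F = fun z : ℂ =>
      (bWfun κ (2 * Real.pi * m * z.im) : ℂ) * Complex.exp (2 * Real.pi * Complex.I * m * z) :=
    funext hF
  set c : ℝ := 2 * Real.pi * m with hc_def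
  have hmR : (0:ℝ) < (m:ℝ) := by exact_mod_cast hm
  have hc : 0 < c := by positivity
  set y : ℝ := z.im with hy_def
  have hcy : 0 < c * y := mul_pos hc hz
  set b : ℝ := c * gfun κ (c * y) with hb_def
  -- derivative of the real part
  have hB : HasDerivAt (fun v : ℝ => bWfun κ (c * v)) b y := by
    have h1 : HasDerivAt (fun v : ℝ => c * v) c y := by
      simpa using (hasDerivAt_id y).const_mul c
    have h2 := (hasDerivAt_bWfun κ hcy).comp y h1
    rw [hb_def, mul_comm]
    exact h2
  -- fderiv of z ↦ (bWfun κ (c z.im) : ℂ)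
  have hG1 : HasFDerivAt (fun w : ℂ => ((bWfun κ (c * w.im) : ℝ) : ℂ))
      (Complex.ofRealCLM.comp (b • Complex.imCLM)) z := by
    have him : HasFDerivAt (fun w : ℂ => w.im) Complex.imCLM z := Complex.imCLM.hasFDerivAt
    have hcomp := HasDerivAt.comp_hasFDerivAt z hB him
    exact Complex.ofRealCLM.hasFDerivAt.comp z hcomp
  -- fderiv of z ↦ exp(2πimz)
  set a : ℂ := 2 * Real.pi * Complex.I * m with ha_def
  set E : ℂ → ℂ := fun w => Complex.exp (a * w) with hE_def
  have hE : HasDerivAt E (a * E z) z := by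
    have h1 : HasDerivAt (fun w : ℂ => a * w) a z := by
      simpa using (hasDerivAt_id z).const_mul a
    simpa [hE_def, mul_comm] using h1.cexp
  have hE' : HasFDerivAt E (((1 : ℂ →L[ℂ] ℂ).smulRight (a * E z)).restrictScalars ℝ) z :=
    (hE.hasFDerivAt).restrictScalars ℝ
  -- product
  have hFd : HasFDerivAt F
      (((bWfun κ (c * y) : ℝ) : ℂ) • (((1 : ℂ →L[ℂ] ℂ).smulRight (a * E z)).restrictScalars ℝ)
        + E z • (Complex.ofRealCLM.comp (b • Complex.imCLM))) z := by
    rw [hFfun]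
    have := hG1.mul hE'
    exact this
  have hfd := hFd.fderiv
  -- evaluate
  have ev1 : fderiv ℝ F z 1 = ((bWfun κ (c * y) : ℝ) : ℂ) * (a * E z) := by
    rw [hfd]; simp
  have evI : fderiv ℝ F z Complex.I
      = ((bWfun κ (c * y) : ℝ) : ℂ) * (Complex.I * (a * E z)) + E z * b := by
    rw [hfd]; simp
  set W : ℝ := Wfun (2 - κ) (-(c * y)) with hW_def
  have hy0 : (y:ℂ) ≠ 0 := Complex.ofReal_ne_zero.2 (ne_of_gt hz)
  have hc0 : (c:ℂ) ≠ 0 := Complex.ofReal_ne_zero.2 (ne_of_gt hc)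
  have hxi : (1/2 : ℂ) * (fderiv ℝ F z 1 + Complex.I * fderiv ℝ F z Complex.I)
      = Complex.I * ((b:ℝ):ℂ) / 2 * E z := by
    rw [ev1, evI]
    linear_combination (((bWfun κ (c * y) : ℝ) : ℂ) * a * E z / 2) * Complex.I_sq
  rw [hxi]
  have hconja : (starRingEnd ℂ) a = -a := by
    rw [ha_def]
    have h1 := map_intCast (starRingEnd ℂ) m
    simp only [map_mul, Complex.conj_I, Complex.conj_ofReal, map_ofNat, h1]
    ring
  have hconj : (starRingEnd ℂ) (Complex.I * ((b:ℝ):ℂ) / 2 * E z)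
      = -Complex.I * ((b:ℝ):ℂ) / 2 * Complex.exp (-a * (starRingEnd ℂ) z) := by
    rw [hE_def]
    rw [map_mul, map_div₀, map_mul, ← Complex.exp_conj, map_mul, hconja]
    simp only [Complex.conj_I, Complex.conj_ofReal, map_ofNat]
  rw [hconj]
  have step1 : 2 * Complex.I * (y:ℂ) ^ κ *
      (-Complex.I * ((b:ℝ):ℂ) / 2 * Complex.exp (-a * (starRingEnd ℂ) z))
      = (y:ℂ) ^ κ * ((b:ℝ):ℂ) * Complex.exp (-a * (starRingEnd ℂ) z) := by
    linear_combination (-((y:ℂ) ^ κ * ((b:ℝ):ℂ) * Complex.exp (-a * (starRingEnd ℂ) z))) *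
      Complex.I_sq
  rw [step1]
  have hbC : ((b:ℝ):ℂ) = (c:ℂ) * (W:ℂ) * ((c:ℂ)*(y:ℂ))^(-κ)
      * Complex.exp (2*(c:ℂ)*(y:ℂ)) := by
    rw [hb_def]
    unfold gfun
    rw [← hW_def]
    push_cast
    ring
  have hzpow : ((c:ℂ)*(y:ℂ))^(-κ) = (c:ℂ)^(-κ) * (y:ℂ)^(-κ) := mul_zpow _ _ _
  have h1 : (y:ℂ)^κ * (y:ℂ)^(-κ) = 1 := by
    rw [← zpow_add₀ hy0]; simp
  have h2 : (c:ℂ) * (c:ℂ)^(-κ) = (c:ℂ)^(1-κ) := by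
    rw [sub_eq_add_neg, zpow_add₀ hc0]; simp
  have h3 : Complex.exp (2*(c:ℂ)*(y:ℂ)) * Complex.exp (-a * (starRingEnd ℂ) z)
      = Complex.exp (-a * z) := by
    rw [← Complex.exp_add]
    congr 1
    have hzc : (starRingEnd ℂ) z = z - 2*(y:ℂ)*Complex.I := by
      have h := Complex.sub_conj z
      rw [← hy_def] at h
      push_cast at h
      linear_combination -h
    rw [hzc, ha_def, hc_def]
    push_cast
    linear_combination (4*(Real.pi:ℂ)*(m:ℂ)*(y:ℂ)) * Complex.I_sq
  have hcast : ((c ^ (1 - κ) : ℝ) : ℂ) = (c:ℂ)^(1-κ) := by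
    push_cast; ring
  have hexpRHS : Complex.exp (-2 * Real.pi * Complex.I * m * z) = Complex.exp (-a * z) := by
    congr 1; rw [ha_def]; ring
  rw [hbC, hzpow, hcast, hexpRHS]
  calc (y:ℂ)^κ * ((c:ℂ) * (W:ℂ) * ((c:ℂ)^(-κ) * (y:ℂ)^(-κ)) * Complex.exp (2*(c:ℂ)*(y:ℂ)))
        * Complex.exp (-a * (starRingEnd ℂ) z)
      = ((c:ℂ)*(c:ℂ)^(-κ)) * ((y:ℂ)^κ*(y:ℂ)^(-κ)) * (W:ℂ) *
        (Complex.exp (2*(c:ℂ)*(y:ℂ)) * Complex.exp (-a * (starRingEnd ℂ) z)) := by ring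
    _ = (c:ℂ)^(1-κ) * 1 * (W:ℂ) * Complex.exp (-a * z) := by rw [h1, h2, h3]
    _ = (c:ℂ)^(1-κ) * (W:ℂ) * Complex.exp (-a * z) := by ring
end

section
/- Fix κ ∈ ℤ. As w → −∞ one has W_κ(w) = (−2w)^{−κ} e^{2w} + O(|w|^{−κ−1} e^{2w}), where W_κ(w) := (−2w)^{1−κ} ∫₁^∞ e^{2wt} t^{−κ} dt. Equivalently, the function w ↦ (W_κ(w) − (−2w)^{−κ} e^{2w}) · |w|^{κ+1} e^{−2w} is bounded on some interval (−∞, −M]. -/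
open MeasureTheory
open Set Real

lemma aux_self_le_exp (x : ℝ) : x ≤ Real.exp x :=
  le_trans (by linarith) (Real.add_one_le_exp x)

lemma aux_pow_le_exp (n : ℕ) {t : ℝ} (ht : 0 ≤ t) : t ^ n ≤ (Nat.factorial n : ℝ) * Real.exp t := by
  have h := Real.sum_le_exp_of_nonneg ht (n + 1)
  have h2 : t ^ n / (Nat.factorial n : ℝ) ≤ ∑ i ∈ Finset.range (n + 1), t ^ i / (Nat.factorial i : ℝ) := by
    apply Finset.single_le_sum (f := fun i => t ^ i / (Nat.factorial i : ℝ))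
    · intro i _
      positivity
    · simp
  have hn : (0:ℝ) < (Nat.factorial n : ℝ) := by positivity
  rw [div_le_iff₀ hn] at h2
  nlinarith [Real.exp_pos t]

lemma aux_abs_zpow_sub_one (κ : ℤ) {t : ℝ} (ht : 1 ≤ t) :
    |t ^ (-κ) - 1| ≤ (κ.natAbs : ℝ) * ((t - 1) * t ^ κ.natAbs) := by
  set n := κ.natAbs with hn
  have ht0 : (0:ℝ) < t := lt_of_lt_of_le one_pos ht
  have hx : (1:ℝ) ≤ t ^ n := one_le_pow₀ ht
  have h1 : t ^ n - 1 ≤ (n:ℝ) * ((t - 1) * t ^ n) := by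
    rw [← geom_sum_mul t n]
    have hsum : (∑ i ∈ Finset.range n, t ^ i) ≤ (n:ℝ) * t ^ n := by
      calc (∑ i ∈ Finset.range n, t ^ i) ≤ ∑ _i ∈ Finset.range n, t ^ n :=
            Finset.sum_le_sum fun i hi => pow_le_pow_right₀ ht (Finset.mem_range.mp hi).le
        _ = (n:ℝ) * t ^ n := by simp [mul_comm]
    nlinarith [sub_nonneg.mpr ht, pow_nonneg ht0.le n]
  have h2 : |t ^ (-κ) - 1| ≤ t ^ n - 1 := by
    rcases le_or_gt 0 κ with hκ | hκ
    · have he : t ^ (-κ) = (t ^ n)⁻¹ := by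
        rw [zpow_neg]
        congr 1
        rw [← zpow_natCast]
        congr 1
        rw [hn]
        exact (Int.natAbs_of_nonneg hκ).symm
      rw [he, abs_sub_comm, abs_of_nonneg (by simp [inv_le_one_iff₀]; right; exact hx)]
      have hxi : (t ^ n) * (t ^ n)⁻¹ = 1 := mul_inv_cancel₀ (by positivity)
      nlinarith [inv_nonneg.mpr (le_of_lt (by positivity : (0:ℝ) < t ^ n))]
    · have he : t ^ (-κ) = t ^ n := by
        rw [← zpow_natCast]
        congr 1
        rw [hn]
        omega
      rw [he, abs_of_nonneg (by linarith)]
  linarith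

/-- As `w → −∞`, `W_κ(w) = (−2w)^{−κ} e^{2w} + O(|w|^{−κ−1} e^{2w})`: the function
`w ↦ (W_κ(w) − (−2w)^{−κ} e^{2w})·|w|^{κ+1}·e^{−2w}` is bounded on some `(−∞, −M]`. -/
theorem W_asymptotic (κ : ℤ) :
    ∃ M C : ℝ, 0 < M ∧ ∀ w : ℝ, w ≤ -M →
      |(Wfun κ w - (-2 * w) ^ (-κ) * Real.exp (2 * w)) * |w| ^ (κ + 1) * Real.exp (-2 * w)| ≤ C := by
  classical
  set n := κ.natAbs with hn
  set F : ℝ := (Nat.factorial n : ℝ) with hF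
  have hF1 : (1:ℝ) ≤ F := by rw [hF]; exact_mod_cast Nat.one_le_iff_ne_zero.mpr (Nat.factorial_ne_zero n)
  refine ⟨2, 8 * ((n:ℝ) * F * Real.exp 1) * (2:ℝ) ^ (-(κ+1)), two_pos, fun w hw => ?_⟩
  have hw0 : w < 0 := by linarith
  set a : ℝ := -2 * w with ha
  have ha4 : (4:ℝ) ≤ a := by rw [ha]; linarith
  have ha0 : (0:ℝ) < a := by linarith
  have hane : a ≠ 0 := ne_of_gt ha0
  have hw2 : 2 * w = -a := by rw [ha]; ring
  have h2w : ∀ t : ℝ, 2 * w * t = -(a * t) := fun t => by rw [ha]; ring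
  have habs : |w| = a / 2 := by rw [abs_of_neg hw0, ha]; ring
  have hnegw : -2 * w = a := by rw [ha]
  -- integrability of exponentials
  have hIg : ∀ b : ℝ, 0 < b → IntegrableOn (fun t => Real.exp (-(b * t))) (Ioi (1:ℝ)) := by
    intro b hb
    simpa [neg_mul] using exp_neg_integrableOn_Ioi 1 hb
  have hint2 : IntegrableOn (fun t => Real.exp (-(a * t))) (Ioi (1:ℝ)) := hIg a ha0
  have hmeas : AEStronglyMeasurable (fun t => Real.exp (-(a*t)) * t ^ (-κ))
      (volume.restrict (Ioi (1:ℝ))) := by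
    apply ContinuousOn.aestronglyMeasurable _ measurableSet_Ioi
    intro t ht
    have ht0 : t ≠ 0 := ne_of_gt (lt_trans one_pos ht)
    exact (((Real.continuous_exp.comp (continuous_const.mul continuous_id).neg).continuousAt).mul
      (continuousAt_zpow₀ t (-κ) (Or.inl ht0))).continuousWithinAt
  have hptint : ∀ t : ℝ, 1 ≤ t → Real.exp (-(a*t)) * |t ^ (-κ)| ≤ F * Real.exp (-(a/2 * t)) := by
    intro t ht
    have ht0 : (0:ℝ) < t := lt_of_lt_of_le one_pos ht
    have h1 : |t ^ (-κ)| ≤ F * Real.exp t := by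
      rw [abs_of_nonneg (zpow_nonneg ht0.le _)]
      calc t ^ (-κ) ≤ t ^ (n:ℤ) := zpow_le_zpow_right₀ ht (by rw [hn]; omega)
        _ = t ^ n := zpow_natCast t n
        _ ≤ F * Real.exp t := aux_pow_le_exp n ht0.le
    calc Real.exp (-(a*t)) * |t ^ (-κ)|
        ≤ Real.exp (-(a*t)) * (F * Real.exp t) :=
          mul_le_mul_of_nonneg_left h1 (Real.exp_pos _).le
      _ = F * Real.exp (-(a*t) + t) := by rw [Real.exp_add]; ring
      _ ≤ F * Real.exp (-(a/2 * t)) := by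
          apply mul_le_mul_of_nonneg_left (Real.exp_le_exp.mpr (by nlinarith)) (by linarith)
  have hint1 : IntegrableOn (fun t => Real.exp (-(a*t)) * t ^ (-κ)) (Ioi (1:ℝ)) := by
    apply Integrable.mono' ((hIg (a/2) (by linarith)).const_mul F) hmeas
    filter_upwards [ae_restrict_mem measurableSet_Ioi] with t ht
    rw [norm_mul, Real.norm_eq_abs, Real.norm_eq_abs, abs_of_nonneg (Real.exp_pos _).le]
    exact hptint t (le_of_lt ht)
  -- value of the exponential integral
  have hIval : ∀ b : ℝ, 0 < b → (∫ t in Ioi (1:ℝ), Real.exp (-(b * t))) = b⁻¹ * Real.exp (-b) := by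
    intro b hb
    have h := integral_comp_mul_left_Ioi (fun x => Real.exp (-x)) 1 hb
    simpa [mul_one, smul_eq_mul, integral_exp_neg_Ioi, integral_exp_Iic] using h
  -- the difference identity
  have hfun : (fun t : ℝ => Real.exp (-(a*t)) * (t ^ (-κ) - 1))
      = fun t => Real.exp (-(a*t)) * t ^ (-κ) - Real.exp (-(a*t)) := by
    funext t; ring
  have hintd : IntegrableOn (fun t => Real.exp (-(a*t)) * (t ^ (-κ) - 1)) (Ioi (1:ℝ)) := by
    rw [hfun]; exact hint1.sub hint2
  have hsplit : (∫ t in Ioi (1:ℝ), Real.exp (-(a*t)) * (t ^ (-κ) - 1))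
      = (∫ t in Ioi (1:ℝ), Real.exp (-(a*t)) * t ^ (-κ)) - a⁻¹ * Real.exp (-a) := by
    rw [hfun, integral_sub hint1 hint2, hIval a ha0]
  have hWfun : Wfun κ w - a ^ (-κ) * Real.exp (2*w)
      = a ^ (1-κ) * ∫ t in Ioi (1:ℝ), Real.exp (-(a*t)) * (t ^ (-κ) - 1) := by
    rw [hsplit]
    unfold Wfun
    rw [hnegw]
    simp only [h2w]
    rw [hw2]
    rw [mul_sub]
    congr 1
    rw [← mul_assoc, ← zpow_neg_one a, ← zpow_add₀ hane]
    congr 2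
    ring
  -- pointwise bound on the integrand of the difference
  have hpt : ∀ t : ℝ, 1 < t →
      ‖Real.exp (-(a*t)) * (t ^ (-κ) - 1)‖ ≤
        (4/a * ((n:ℝ) * F * Real.exp 1) * Real.exp (-(a/2))) * Real.exp (-(a/2 * t)) := by
    intro t ht
    have ht1 : (1:ℝ) ≤ t := ht.le
    have ht0 : (0:ℝ) < t := lt_trans one_pos ht
    have hA : t - 1 ≤ 4/a * Real.exp (a/4*(t-1)) := by
      have h := aux_self_le_exp (a/4*(t-1))
      have h2 := mul_le_mul_of_nonneg_left h (by positivity : (0:ℝ) ≤ 4/a)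
      have h3 : 4/a * (a/4*(t-1)) = t - 1 := by field_simp
      linarith
    have hFe : (0:ℝ) ≤ F * Real.exp 1 := mul_nonneg (by linarith) (Real.exp_pos 1).le
    have hB : t^n ≤ F * Real.exp 1 * Real.exp (a/4*(t-1)) := by
      have hb1 : t^n ≤ F * Real.exp t := aux_pow_le_exp n ht0.le
      have hb2 : Real.exp t = Real.exp 1 * Real.exp (t-1) := by
        rw [← Real.exp_add]; congr 1; ring
      have hb3 : Real.exp (t-1) ≤ Real.exp (a/4*(t-1)) := Real.exp_le_exp.mpr (by nlinarith)
      calc t^n ≤ F * Real.exp t := hb1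
        _ = F * Real.exp 1 * Real.exp (t-1) := by rw [hb2]; ring
        _ ≤ F * Real.exp 1 * Real.exp (a/4*(t-1)) := mul_le_mul_of_nonneg_left hb3 hFe
    calc ‖Real.exp (-(a*t)) * (t ^ (-κ) - 1)‖
        = Real.exp (-(a*t)) * |t ^ (-κ) - 1| := by
          rw [norm_mul, Real.norm_eq_abs, Real.norm_eq_abs,
            abs_of_nonneg (Real.exp_pos _).le]
      _ ≤ Real.exp (-(a*t)) * ((n:ℝ) * ((t-1) * t^n)) :=
          mul_le_mul_of_nonneg_left (aux_abs_zpow_sub_one κ ht1) (Real.exp_pos _).le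
      _ ≤ Real.exp (-(a*t)) * ((n:ℝ) *
            ((4/a * Real.exp (a/4*(t-1))) * (F * Real.exp 1 * Real.exp (a/4*(t-1))))) := by
          apply mul_le_mul_of_nonneg_left _ (Real.exp_pos _).le
          apply mul_le_mul_of_nonneg_left _ (Nat.cast_nonneg n)
          exact mul_le_mul hA hB (pow_nonneg ht0.le n) (by positivity)
      _ = (4/a * ((n:ℝ) * F * Real.exp 1) * Real.exp (-(a/2))) * Real.exp (-(a/2 * t)) := by
          have hE : Real.exp (-(a*t)) * (Real.exp (a/4*(t-1)) * Real.exp (a/4*(t-1)))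
              = Real.exp (-(a/2)) * Real.exp (-(a/2*t)) := by
            rw [← Real.exp_add, ← Real.exp_add, ← Real.exp_add]; congr 1; ring
          linear_combination ((n:ℝ) * (4/a) * (F * Real.exp 1)) * hE
  -- bound on the integral
  have hIb' : |∫ t in Ioi (1:ℝ), Real.exp (-(a*t)) * (t ^ (-κ) - 1)|
      ≤ 8 * ((n:ℝ) * F * Real.exp 1) / (a*a) * Real.exp (-a) := by
    rw [← Real.norm_eq_abs]
    have hg : Integrable (fun t => (4/a * ((n:ℝ) * F * Real.exp 1) * Real.exp (-(a/2)))
        * Real.exp (-(a/2 * t))) (volume.restrict (Ioi (1:ℝ))) :=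
      (hIg (a/2) (by linarith)).const_mul _
    have h := norm_integral_le_of_norm_le hg
      (by filter_upwards [ae_restrict_mem measurableSet_Ioi] with t ht; exact hpt t ht)
    refine h.trans ?_
    rw [integral_const_mul, hIval (a/2) (by linarith)]
    rw [inv_div]
    have hee : Real.exp (-(a/2)) * Real.exp (-(a/2)) = Real.exp (-a) := by
      rw [← Real.exp_add]; congr 1; ring
    linear_combination (8 * ((n:ℝ) * F * Real.exp 1) / (a*a)) * hee
  -- final assembly
  rw [hWfun, habs]
  rw [abs_mul, abs_mul, abs_mul, abs_of_pos (Real.exp_pos a),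
    abs_of_pos (zpow_pos ha0 (1-κ)),
    abs_of_pos (zpow_pos (show (0:ℝ) < a/2 by linarith) (κ+1))]
  have h1 : (0:ℝ) < a^(1-κ) := zpow_pos ha0 _
  have h2 : (0:ℝ) < (a/2)^(κ+1) := zpow_pos (by linarith) _
  have h3 := Real.exp_pos a
  have s1 := mul_le_mul_of_nonneg_left hIb' h1.le
  have s2 := mul_le_mul_of_nonneg_right s1 h2.le
  have s3 := mul_le_mul_of_nonneg_right s2 h3.le
  refine s3.trans_eq ?_
  have e1 : ((a/2):ℝ)^(κ+1) = a^(κ+1) * ((2:ℝ)^(-(κ+1))) := by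
    rw [div_eq_mul_inv, mul_zpow, inv_zpow, ← zpow_neg]
  have e2 : a^(1-κ) * a^(κ+1) = a * a := by
    rw [← zpow_add₀ hane]
    have : (1:ℤ) - κ + (κ+1) = 2 := by ring
    rw [this, zpow_two]
  have e3 : Real.exp (-a) * Real.exp a = 1 := by rw [← Real.exp_add]; simp
  rw [e1]
  have e4 : a^(1-κ) * (8 * ((n:ℝ) * F * Real.exp 1) / (a*a) * Real.exp (-a))
        * (a^(κ+1) * (2:ℝ)^(-(κ+1))) * Real.exp a
      = (a^(1-κ) * a^(κ+1)) * (Real.exp (-a) * Real.exp a)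
        * (8 * ((n:ℝ) * F * Real.exp 1) * (2:ℝ)^(-(κ+1))) / (a*a) := by ring
  rw [e4, e2, e3]
  field_simp
end

section
/- Fix κ ∈ ℤ. As w → +∞ one has 𝐖_κ(w) = −2^{κ−2} w^{−1} + O(w^{−2}), i.e. the function w ↦ (𝐖_κ(w) + 2^{κ−2}/w) · w² is bounded on some interval [M, ∞). -/
open MeasureTheory

namespace BWAux

open Set Real Filter

/-- The inner integral, as a function of the (positive) parameter `t`. -/
noncomputable def J (m : ℤ) (t : ℝ) : ℝ :=
  ∫ s in Set.Ioi (1 : ℝ), Real.exp (-(2 * t) * s) * s ^ m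

lemma zpow_neg_two (t : ℝ) : t ^ (-2 : ℤ) = (t ^ 2)⁻¹ := by
  rw [zpow_neg]; norm_cast

lemma zpow_neg_three (t : ℝ) : t ^ (-3 : ℤ) = (t ^ 3)⁻¹ := by
  rw [zpow_neg]; norm_cast

lemma pow_sub_one_le (k : ℕ) {s : ℝ} (hs : 1 ≤ s) :
    s ^ k - 1 ≤ (k : ℝ) * (s - 1) * s ^ k := by
  induction k with
  | zero => simp
  | succ k ih =>
    have hs0 : (0:ℝ) ≤ s := by linarith
    have h1 : (1:ℝ) ≤ s ^ (k+1) := one_le_pow₀ hs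
    have h2 : s ^ k ≤ s ^ (k+1) := pow_le_pow_right₀ hs (by omega)
    have h3 : s ^ (k+1) - 1 = s * (s ^ k - 1) + (s - 1) := by ring
    have h4 : s * (s ^ k - 1) ≤ s * ((k : ℝ) * (s - 1) * s ^ k) :=
      mul_le_mul_of_nonneg_left ih hs0
    have h5 : s * ((k : ℝ) * (s - 1) * s ^ k) = (k : ℝ) * (s - 1) * s ^ (k+1) := by ring
    have h6 : s - 1 ≤ (s - 1) * s ^ (k+1) := by nlinarith
    push_cast
    nlinarith

lemma pow_le_exp {s : ℝ} (hs : 1 ≤ s) (k : ℕ) :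
    s ^ k ≤ Real.exp ((k : ℝ) * (s - 1)) := by
  have h1 : s ≤ Real.exp (s - 1) := by
    have := Real.add_one_le_exp (s - 1); linarith
  calc s ^ k ≤ (Real.exp (s - 1)) ^ k :=
        pow_le_pow_left₀ (by linarith) h1 k
    _ = Real.exp ((k : ℝ) * (s - 1)) := by
        rw [← Real.exp_nat_mul]

lemma abs_zpow_sub_one_le (m : ℤ) {s : ℝ} (hs : 1 ≤ s) :
    |s ^ m - 1| ≤ (m.natAbs : ℝ) * (s - 1) *
      Real.exp ((m.natAbs : ℝ) * (s - 1)) := by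
  have hs0 : (0:ℝ) < s := by linarith
  set k := m.natAbs with hk
  have hpow1 : (1:ℝ) ≤ s ^ k := one_le_pow₀ hs
  have key : s ^ k - 1 ≤ (k : ℝ) * (s - 1) * Real.exp ((k : ℝ) * (s - 1)) :=
    le_trans (pow_sub_one_le k hs)
      (mul_le_mul_of_nonneg_left (pow_le_exp hs k)
        (mul_nonneg (by positivity) (by linarith)))
  rcases le_or_gt 0 m with hm | hm
  · have hmk : s ^ m = s ^ k := by
      rw [← zpow_natCast s k, hk, Int.natAbs_of_nonneg hm]
    rw [hmk, abs_of_nonneg (by linarith)]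
    exact key
  · have hmk : s ^ m = (s ^ k)⁻¹ := by
      have : m = -(k : ℤ) := by
        rw [hk]; omega
      rw [this, zpow_neg, zpow_natCast]
    have hinv : (s ^ k)⁻¹ ≤ 1 := inv_le_one_of_one_le₀ hpow1
    have hinv0 : (0:ℝ) < (s ^ k)⁻¹ := by positivity
    rw [hmk, abs_of_nonpos (by linarith)]
    have h2 : 1 - (s ^ k)⁻¹ ≤ s ^ k - 1 := by
      have h3 : (s ^ k)⁻¹ * s ^ k = 1 := inv_mul_cancel₀ (by positivity)
      nlinarith
    linarith

lemma integral_exp_neg_mul_Ioi {c : ℝ} (hc : 0 < c) (a : ℝ) :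
    ∫ s in Set.Ioi a, Real.exp (-c * s) = Real.exp (-c * a) / c := by
  have hd : ∀ x ∈ Set.Ici a,
      HasDerivAt (fun s => -Real.exp (-c * s) / c) (Real.exp (-c * x)) x := by
    intro x _
    have h1 : HasDerivAt (fun s : ℝ => -c * s) (-c) x := by
      simpa using (hasDerivAt_id x).const_mul (-c)
    have h2 : HasDerivAt (fun s => -Real.exp (-c * s) / c) (-(Real.exp (-c * x) * -c) / c) x :=
      (h1.exp.neg).div_const c
    convert h2 using 1
    have hc' : c ≠ 0 := hc.ne'
    field_simp
  have ht : Filter.Tendsto (fun s => -Real.exp (-c * s) / c) Filter.atTop (nhds (-0 / c)) := by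
    refine Filter.Tendsto.div_const (Filter.Tendsto.neg ?_) _
    exact Real.tendsto_exp_atBot.comp (tendsto_id.const_mul_atTop_of_neg (by linarith))
  have := integral_Ioi_of_hasDerivAt_of_tendsto' hd (exp_neg_integrableOn_Ioi a hc) ht
  rw [this]; field_simp; ring

lemma J_integrand_measurable (m : ℤ) (t : ℝ) :
    Measurable fun s : ℝ => Real.exp (-(2 * t) * s) * s ^ m :=
  (Real.measurable_exp.comp (measurable_id.const_mul _)).mul (measurable_id.pow_const m)

lemma J_integrand_integrable (m : ℤ) {t : ℝ} (ht : (m.natAbs : ℝ) + 1 ≤ 2 * t) :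
    IntegrableOn (fun s : ℝ => Real.exp (-(2 * t) * s) * s ^ m) (Set.Ioi 1) := by
  set n : ℝ := (m.natAbs : ℝ) with hn
  have hpos : 0 < 2 * t - n := by linarith
  refine Integrable.mono' (exp_neg_integrableOn_Ioi 1 hpos)
    ((J_integrand_measurable m t).aestronglyMeasurable) ?_
  filter_upwards [ae_restrict_mem measurableSet_Ioi] with s hs
  have hs1 : (1:ℝ) ≤ s := le_of_lt hs
  have hs0 : (0:ℝ) < s := by linarith
  have h1 : |s ^ m| ≤ s ^ m.natAbs := by
    rcases le_or_gt 0 m with hm | hm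
    · have : s ^ m = s ^ m.natAbs := by
        rw [← zpow_natCast s m.natAbs, Int.natAbs_of_nonneg hm]
      rw [this, abs_of_nonneg (by positivity)]
    · have hmk : s ^ m = (s ^ m.natAbs)⁻¹ := by
        have h : m = -(m.natAbs : ℤ) := by omega
        conv_lhs => rw [h]
        rw [zpow_neg, zpow_natCast]
      rw [hmk, abs_of_nonneg (by positivity)]
      exact le_trans (inv_le_one_of_one_le₀ (one_le_pow₀ hs1)) (one_le_pow₀ hs1)
  have h2 : s ^ m.natAbs ≤ Real.exp (n * s) := by
    calc s ^ m.natAbs ≤ Real.exp (n * (s - 1)) := pow_le_exp hs1 m.natAbs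
      _ ≤ Real.exp (n * s) := by
          apply Real.exp_le_exp.2
          have : (0:ℝ) ≤ n := by positivity
          nlinarith
  have : ‖Real.exp (-(2 * t) * s) * s ^ m‖ = Real.exp (-(2 * t) * s) * |s ^ m| := by
    rw [norm_mul, Real.norm_eq_abs, abs_of_pos (Real.exp_pos _), Real.norm_eq_abs]
  rw [this]
  calc Real.exp (-(2 * t) * s) * |s ^ m|
      ≤ Real.exp (-(2 * t) * s) * Real.exp (n * s) :=
        mul_le_mul_of_nonneg_left (le_trans h1 h2) (Real.exp_pos _).le
    _ = Real.exp (-(2 * t - n) * s) := by rw [← Real.exp_add]; ring_nf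

lemma J_est (m : ℤ) {t : ℝ} (ht : 2 * (m.natAbs : ℝ) + 2 ≤ t) :
    |J m t - Real.exp (-(2 * t)) / (2 * t)| ≤
      2 * (m.natAbs : ℝ) * Real.exp (-(2 * t)) / t ^ 2 := by
  set n : ℝ := (m.natAbs : ℝ) with hn
  have hn0 : (0:ℝ) ≤ n := by positivity
  have ht2 : (2:ℝ) ≤ t := by linarith
  have ht0 : (0:ℝ) < t := by linarith
  have hint1 : IntegrableOn (fun s : ℝ => Real.exp (-(2 * t) * s) * s ^ m) (Set.Ioi 1) :=
    J_integrand_integrable m (by linarith)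
  have hint2 : IntegrableOn (fun s : ℝ => Real.exp (-(2 * t) * s)) (Set.Ioi 1) :=
    exp_neg_integrableOn_Ioi 1 (by linarith)
  have hval : ∫ s in Set.Ioi (1:ℝ), Real.exp (-(2 * t) * s) = Real.exp (-(2 * t)) / (2 * t) := by
    rw [integral_exp_neg_mul_Ioi (by linarith) 1, mul_one]
  have hsub : J m t - Real.exp (-(2 * t)) / (2 * t)
      = ∫ s in Set.Ioi (1:ℝ),
          (Real.exp (-(2 * t) * s) * s ^ m - Real.exp (-(2 * t) * s)) := by
    rw [integral_sub hint1 hint2, hval]; rfl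
  have hbint : IntegrableOn
      (fun s : ℝ => 2 * n / t * (Real.exp (-t) * Real.exp (-t * s))) (Set.Ioi 1) :=
    (((exp_neg_integrableOn_Ioi 1 ht0).const_mul (Real.exp (-t))).const_mul (2 * n / t))
  have hbound : ∀ s ∈ Set.Ioi (1:ℝ),
      ‖Real.exp (-(2 * t) * s) * s ^ m - Real.exp (-(2 * t) * s)‖ ≤
        2 * n / t * (Real.exp (-t) * Real.exp (-t * s)) := by
    intro s hs
    have hs1 : (1:ℝ) ≤ s := le_of_lt hs
    have e0 : Real.exp (-(2 * t) * s) * s ^ m - Real.exp (-(2 * t) * s)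
        = Real.exp (-(2 * t) * s) * (s ^ m - 1) := by ring
    rw [e0, norm_mul, Real.norm_eq_abs, Real.norm_eq_abs, abs_of_pos (Real.exp_pos _)]
    have h1 := abs_zpow_sub_one_le m hs1
    have h2 : (s - 1) ≤ 2 / t * Real.exp (t / 2 * (s - 1)) := by
      have := Real.add_one_le_exp (t / 2 * (s - 1))
      have h3 : t / 2 * (s - 1) ≤ Real.exp (t / 2 * (s - 1)) := by linarith
      rw [div_mul_eq_mul_div, le_div_iff₀ ht0]
      nlinarith
    have h4 : |s ^ m - 1| ≤ n * (2 / t * Real.exp (t / 2 * (s - 1))) *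
        Real.exp (n * (s - 1)) := by
      refine le_trans h1 ?_
      exact mul_le_mul_of_nonneg_right
        (mul_le_mul_of_nonneg_left h2 hn0) (Real.exp_pos _).le
    calc Real.exp (-(2 * t) * s) * |s ^ m - 1|
        ≤ Real.exp (-(2 * t) * s) *
          (n * (2 / t * Real.exp (t / 2 * (s - 1))) * Real.exp (n * (s - 1))) :=
          mul_le_mul_of_nonneg_left h4 (Real.exp_pos _).le
      _ = 2 * n / t * Real.exp (-(2 * t) * s + t / 2 * (s - 1) + n * (s - 1)) := by
          rw [Real.exp_add, Real.exp_add]; ring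
      _ ≤ 2 * n / t * Real.exp (-t * s + -t) := by
          have harg : -(2 * t) * s + t / 2 * (s - 1) + n * (s - 1) ≤ -t * s + -t := by
            nlinarith [sub_nonneg.2 hs1]
          have := Real.exp_le_exp.2 harg
          have h5 : (0:ℝ) ≤ 2 * n / t := by positivity
          nlinarith [Real.exp_pos (-(2 * t) * s + t / 2 * (s - 1) + n * (s - 1)),
            Real.exp_pos (-t * s + -t)]
      _ = 2 * n / t * (Real.exp (-t) * Real.exp (-t * s)) := by
          rw [← Real.exp_add]; ring_nf
  have hnormle : ‖∫ s in Set.Ioi (1:ℝ),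
      (Real.exp (-(2 * t) * s) * s ^ m - Real.exp (-(2 * t) * s))‖ ≤
      ∫ s in Set.Ioi (1:ℝ), 2 * n / t * (Real.exp (-t) * Real.exp (-t * s)) := by
    refine norm_integral_le_of_norm_le hbint ?_
    filter_upwards [ae_restrict_mem measurableSet_Ioi] with s hs
    exact hbound s hs
  have hbval : ∫ s in Set.Ioi (1:ℝ), 2 * n / t * (Real.exp (-t) * Real.exp (-t * s))
      = 2 * n * Real.exp (-(2 * t)) / t ^ 2 := by
    rw [MeasureTheory.integral_const_mul, MeasureTheory.integral_const_mul, integral_exp_neg_mul_Ioi ht0 1]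
    rw [mul_one]
    have he : Real.exp (-t) * Real.exp (-t) = Real.exp (-(2 * t)) := by
      rw [← Real.exp_add]; congr 1; ring
    rw [← he]
    field_simp
  rw [hsub, ← Real.norm_eq_abs]
  rw [hbval] at hnormle
  exact hnormle

lemma F_eq (κ : ℤ) {t : ℝ} (ht : 0 < t) :
    Wfun (2 - κ) (-t) * t ^ (-κ) * Real.exp (2 * t)
      = (2 * t) ^ (κ - 1) * t ^ (-κ) * Real.exp (2 * t) * J (κ - 2) t := by
  unfold Wfun J
  have h1 : (-2 : ℝ) * -t = 2 * t := by ring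
  have h2 : (1 - (2 - κ)) = κ - 1 := by ring
  have h3 : (-(2 - κ)) = κ - 2 := by ring
  rw [h1, h2, h3]
  have h4 : ∀ s : ℝ, 2 * -t * s = -(2 * t) * s := fun s => by ring
  simp_rw [h4]
  ring

lemma coeff_exp_eq (κ : ℤ) {t : ℝ} (ht : 0 < t) :
    (2 * t : ℝ) ^ (κ - 1) * t ^ (-κ) * Real.exp (2 * t) *
      (Real.exp (-(2 * t)) / (2 * t)) = (2 : ℝ) ^ (κ - 2) * (t ^ 2)⁻¹ := by
  have h2t : (0:ℝ) < 2 * t := by linarith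
  have e1 : Real.exp (2 * t) * Real.exp (-(2 * t)) = 1 := by
    rw [← Real.exp_add]; simp
  have e2 : t ^ (κ - 2 : ℤ) * t ^ (-κ) = (t ^ 2)⁻¹ := by
    rw [← zpow_add₀ ht.ne', show κ - 2 + -κ = -2 by ring, zpow_neg_two]
  have e3 : (2 * t : ℝ) ^ (κ - 1) = (2:ℝ) ^ (κ - 2) * t ^ (κ - 2 : ℤ) * (2 * t) := by
    rw [show κ - 1 = (κ - 2) + 1 by ring, zpow_add_one₀ h2t.ne', mul_zpow]
  rw [e3]
  calc (2:ℝ) ^ (κ - 2) * t ^ (κ - 2 : ℤ) * (2 * t) * t ^ (-κ) * Real.exp (2 * t) *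
        (Real.exp (-(2 * t)) / (2 * t))
      = (2:ℝ) ^ (κ - 2) * (t ^ (κ - 2 : ℤ) * t ^ (-κ)) *
        (Real.exp (2 * t) * Real.exp (-(2 * t))) * (2 * t / (2 * t)) := by ring
    _ = (2:ℝ) ^ (κ - 2) * (t ^ 2)⁻¹ := by
        rw [e2, e1, div_self h2t.ne']; ring

lemma coeff_exp_eq' (κ : ℤ) {t : ℝ} (ht : 0 < t) :
    (2 * t : ℝ) ^ (κ - 1) * t ^ (-κ) * Real.exp (2 * t) *
      (Real.exp (-(2 * t)) / t ^ 2) = (2 : ℝ) ^ (κ - 1) * (t ^ 3)⁻¹ := by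
  have h2t : (0:ℝ) < 2 * t := by linarith
  have e1 : Real.exp (2 * t) * Real.exp (-(2 * t)) = 1 := by
    rw [← Real.exp_add]; simp
  have e2 : t ^ (κ - 1 : ℤ) * t ^ (-κ) = t⁻¹ := by
    rw [← zpow_add₀ ht.ne', show κ - 1 + -κ = -1 by ring, zpow_neg]
    norm_num
  have e3 : (2 * t : ℝ) ^ (κ - 1) = (2:ℝ) ^ (κ - 1) * t ^ (κ - 1 : ℤ) := mul_zpow 2 t _
  rw [e3]
  calc (2:ℝ) ^ (κ - 1) * t ^ (κ - 1 : ℤ) * t ^ (-κ) * Real.exp (2 * t) *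
        (Real.exp (-(2 * t)) / t ^ 2)
      = (2:ℝ) ^ (κ - 1) * (t ^ (κ - 1 : ℤ) * t ^ (-κ)) *
        (Real.exp (2 * t) * Real.exp (-(2 * t))) / t ^ 2 := by ring
    _ = (2:ℝ) ^ (κ - 1) * t⁻¹ / t ^ 2 := by rw [e2, e1]; ring
    _ = (2:ℝ) ^ (κ - 1) * (t ^ 3)⁻¹ := by
        have hinv : t⁻¹ / t ^ 2 = (t ^ 3)⁻¹ := by
          field_simp
        rw [mul_div_assoc, hinv]

lemma F_est (κ : ℤ) {t : ℝ} (ht : 2 * (((κ - 2).natAbs : ℝ)) + 2 ≤ t) :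
    |Wfun (2 - κ) (-t) * t ^ (-κ) * Real.exp (2 * t) -
      (2 : ℝ) ^ (κ - 2) * (t ^ 2)⁻¹| ≤
      (2 : ℝ) ^ κ * (((κ - 2).natAbs : ℝ)) * (t ^ 3)⁻¹ := by
  set n : ℝ := ((κ - 2).natAbs : ℝ) with hn
  have hn0 : (0:ℝ) ≤ n := by positivity
  have ht0 : (0:ℝ) < t := by linarith
  set c : ℝ := (2 * t) ^ (κ - 1) * t ^ (-κ) * Real.exp (2 * t) with hc
  have hc0 : 0 < c := by
    have : (0:ℝ) < 2 * t := by linarith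
    exact mul_pos (mul_pos (zpow_pos this _) (zpow_pos ht0 _)) (Real.exp_pos _)
  have hJ := J_est (κ - 2) ht
  have hdiff : Wfun (2 - κ) (-t) * t ^ (-κ) * Real.exp (2 * t) -
      (2 : ℝ) ^ (κ - 2) * (t ^ 2)⁻¹
      = c * (J (κ - 2) t - Real.exp (-(2 * t)) / (2 * t)) := by
    rw [F_eq κ ht0, ← hc, mul_sub, coeff_exp_eq κ ht0]
  rw [hdiff, abs_mul, abs_of_pos hc0]
  calc c * |J (κ - 2) t - Real.exp (-(2 * t)) / (2 * t)|
      ≤ c * (2 * n * Real.exp (-(2 * t)) / t ^ 2) :=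
        mul_le_mul_of_nonneg_left hJ hc0.le
    _ = 2 * n * (c * (Real.exp (-(2 * t)) / t ^ 2)) := by ring
    _ = 2 * n * ((2:ℝ) ^ (κ - 1) * (t ^ 3)⁻¹) := by rw [← coeff_exp_eq' κ ht0]
    _ = (2 : ℝ) ^ κ * n * (t ^ 3)⁻¹ := by
        rw [show κ = (κ - 1) + 1 by ring, zpow_add_one₀ (two_ne_zero)]
        ring

lemma Jmax_anti (m : ℤ) {T : ℝ} (hT : (m.natAbs : ℝ) + 1 ≤ 2 * T) :
    Antitone (fun t : ℝ => J m (max t T)) := by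
  intro a b hab
  have hTa : (m.natAbs : ℝ) + 1 ≤ 2 * max a T := by
    have := le_max_right a T; nlinarith
  have hTb : (m.natAbs : ℝ) + 1 ≤ 2 * max b T := by
    have := le_max_right b T; nlinarith
  have hmax : max a T ≤ max b T := max_le_max hab le_rfl
  refine setIntegral_mono_on (J_integrand_integrable m hTb)
    (J_integrand_integrable m hTa) measurableSet_Ioi ?_
  intro s hs
  have hs1 : (1:ℝ) < s := hs
  have hzp : (0:ℝ) ≤ s ^ m := zpow_nonneg (by linarith) m
  refine mul_le_mul_of_nonneg_right (Real.exp_le_exp.2 ?_) hzp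
  nlinarith

lemma F_integrableOn (κ : ℤ) {w : ℝ} (hw : 2 * (((κ - 2).natAbs : ℝ)) + 2 ≤ w) :
    IntegrableOn (fun t : ℝ => Wfun (2 - κ) (-t) * t ^ (-κ) * Real.exp (2 * t))
      (Set.Ioi w) := by
  set n : ℝ := ((κ - 2).natAbs : ℝ) with hn
  set T : ℝ := 2 * n + 2 with hTdef
  have hn0 : (0:ℝ) ≤ n := hn ▸ Nat.cast_nonneg _
  have hw0 : (0:ℝ) < w := by rw [hTdef] at hw; linarith
  have hT : n + 1 ≤ 2 * T := by rw [hTdef]; linarith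
  have hmeas : Measurable fun t : ℝ =>
      (2 * t) ^ (κ - 1) * t ^ (-κ) * Real.exp (2 * t) * J (κ - 2) (max t T) := by
    refine (((((measurable_id.const_mul (2:ℝ)).pow_const (κ - 1)).mul
      (measurable_id.pow_const (-κ))).mul
      (Real.measurable_exp.comp (measurable_id.const_mul 2))).mul ?_)
    exact (Jmax_anti (κ - 2) hT).measurable
  have haem : AEStronglyMeasurable
      (fun t : ℝ => Wfun (2 - κ) (-t) * t ^ (-κ) * Real.exp (2 * t))
      (volume.restrict (Set.Ioi w)) := by
    refine hmeas.aestronglyMeasurable.congr ?_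
    filter_upwards [ae_restrict_mem measurableSet_Ioi] with t htw
    have htT : T ≤ t := le_trans hw (le_of_lt htw)
    have ht0 : (0:ℝ) < t := lt_of_lt_of_le hw0 (le_of_lt htw)
    rw [max_eq_left htT, F_eq κ ht0]
  have hbint : IntegrableOn
      (fun t : ℝ => (2:ℝ) ^ (κ - 2) * (t ^ 2)⁻¹ + (2:ℝ) ^ κ * n * (t ^ 3)⁻¹)
      (Set.Ioi w) := by
    refine Integrable.add ?_ ?_
    · refine Integrable.const_mul ?_ _
      refine (integrableOn_Ioi_rpow_of_lt (by norm_num : (-2:ℝ) < -1) hw0).congr_fun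
        (fun t htw => ?_) measurableSet_Ioi
      have ht0 : (0:ℝ) < t := lt_trans hw0 htw
      beta_reduce; rw [show (-2:ℝ) = ((-2 : ℤ) : ℝ) by norm_num, Real.rpow_intCast, zpow_neg_two]
    · refine Integrable.const_mul ?_ _
      refine (integrableOn_Ioi_rpow_of_lt (by norm_num : (-3:ℝ) < -1) hw0).congr_fun
        (fun t htw => ?_) measurableSet_Ioi
      have ht0 : (0:ℝ) < t := lt_trans hw0 htw
      beta_reduce; rw [show (-3:ℝ) = ((-3 : ℤ) : ℝ) by norm_num, Real.rpow_intCast, zpow_neg_three]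
  refine Integrable.mono' hbint haem ?_
  filter_upwards [ae_restrict_mem measurableSet_Ioi] with t htw
  have htT : 2 * n + 2 ≤ t := le_trans hw (le_of_lt htw)
  have ht0 : (0:ℝ) < t := lt_of_lt_of_le hw0 (le_of_lt htw)
  have h1 := F_est κ htT
  have h2 : (0:ℝ) < (2:ℝ) ^ (κ - 2) * (t ^ 2)⁻¹ := by positivity
  rw [Real.norm_eq_abs]
  calc |Wfun (2 - κ) (-t) * t ^ (-κ) * Real.exp (2 * t)|
      ≤ |Wfun (2 - κ) (-t) * t ^ (-κ) * Real.exp (2 * t) -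
          (2 : ℝ) ^ (κ - 2) * (t ^ 2)⁻¹| + |(2 : ℝ) ^ (κ - 2) * (t ^ 2)⁻¹| := by
        have h := abs_add_le (Wfun (2 - κ) (-t) * t ^ (-κ) * Real.exp (2 * t) -
          (2 : ℝ) ^ (κ - 2) * (t ^ 2)⁻¹) ((2 : ℝ) ^ (κ - 2) * (t ^ 2)⁻¹)
        simpa using h
    _ ≤ (2:ℝ) ^ (κ - 2) * (t ^ 2)⁻¹ + (2:ℝ) ^ κ * n * (t ^ 3)⁻¹ := by
        rw [abs_of_pos h2]
        linarith [h1]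

lemma integral_inv_sq {w : ℝ} (hw : 0 < w) :
    ∫ t in Set.Ioi w, (t ^ 2)⁻¹ = w⁻¹ := by
  have h : ∫ t in Set.Ioi w, (t:ℝ) ^ (-2 : ℝ) = -w ^ ((-2:ℝ) + 1) / ((-2:ℝ) + 1) :=
    integral_Ioi_rpow_of_lt (by norm_num) hw
  rw [show ((-2:ℝ) + 1) = -1 by norm_num] at h
  have hcong : ∀ t ∈ Set.Ioi w, (t:ℝ) ^ (-2 : ℝ) = (t ^ 2)⁻¹ := fun t htw => by
    rw [show (-2:ℝ) = ((-2 : ℤ) : ℝ) by norm_num, Real.rpow_intCast, BWAux.zpow_neg_two]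
  rw [setIntegral_congr_fun measurableSet_Ioi hcong] at h
  rw [h, show (-1:ℝ) = ((-1 : ℤ) : ℝ) by norm_num, Real.rpow_intCast]
  rw [zpow_neg, zpow_one]
  norm_num

lemma integral_inv_cube {w : ℝ} (hw : 0 < w) :
    ∫ t in Set.Ioi w, (t ^ 3)⁻¹ = (w ^ 2)⁻¹ / 2 := by
  have h : ∫ t in Set.Ioi w, (t:ℝ) ^ (-3 : ℝ) = -w ^ ((-3:ℝ) + 1) / ((-3:ℝ) + 1) :=
    integral_Ioi_rpow_of_lt (by norm_num) hw
  rw [show ((-3:ℝ) + 1) = -2 by norm_num] at h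
  have hcong : ∀ t ∈ Set.Ioi w, (t:ℝ) ^ (-3 : ℝ) = (t ^ 3)⁻¹ := fun t htw => by
    rw [show (-3:ℝ) = ((-3 : ℤ) : ℝ) by norm_num, Real.rpow_intCast, BWAux.zpow_neg_three]
  rw [setIntegral_congr_fun measurableSet_Ioi hcong] at h
  rw [h, show (-2:ℝ) = ((-2 : ℤ) : ℝ) by norm_num, Real.rpow_intCast, BWAux.zpow_neg_two]
  ring

end BWAux

/-- As `w → +∞`, `𝐖_κ(w) = −2^{κ−2} w^{−1} + O(w^{−2})`: the function
`w ↦ (𝐖_κ(w) + 2^{κ−2}/w)·w²` is bounded on some `[M, ∞)`. -/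
theorem bW_asymptotic (κ : ℤ) :
    ∃ M C : ℝ, 0 < M ∧ ∀ w : ℝ, M ≤ w →
      |(bWfun κ w + (2 : ℝ) ^ (κ - 2) / w) * w ^ 2| ≤ C := by
  classical
  set n : ℝ := ((κ - 2).natAbs : ℝ) with hn
  have hn0 : (0:ℝ) ≤ n := by positivity
  refine ⟨2 * n + 2, (2:ℝ) ^ κ * n / 2, by positivity, ?_⟩
  intro w hw
  have hw0 : (0:ℝ) < w := by linarith
  have hFint := BWAux.F_integrableOn κ hw
  have hGint : IntegrableOn (fun t : ℝ => (2:ℝ) ^ (κ - 2) * (t ^ 2)⁻¹) (Set.Ioi w) := by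
    refine Integrable.const_mul ?_ _
    refine (integrableOn_Ioi_rpow_of_lt (by norm_num : (-2:ℝ) < -1) hw0).congr_fun
      (fun t htw => ?_) measurableSet_Ioi
    have ht0 : (0:ℝ) < t := lt_trans hw0 htw
    beta_reduce; rw [show (-2:ℝ) = ((-2 : ℤ) : ℝ) by norm_num, Real.rpow_intCast, BWAux.zpow_neg_two]
  have hG : ∫ t in Set.Ioi w, (2:ℝ) ^ (κ - 2) * (t ^ 2)⁻¹ = (2:ℝ) ^ (κ - 2) / w := by
    rw [MeasureTheory.integral_const_mul, BWAux.integral_inv_sq hw0]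
    ring
  have key : bWfun κ w + (2 : ℝ) ^ (κ - 2) / w
      = ∫ t in Set.Ioi w, ((2:ℝ) ^ (κ - 2) * (t ^ 2)⁻¹ -
          Wfun (2 - κ) (-t) * t ^ (-κ) * Real.exp (2 * t)) := by
    rw [integral_sub hGint hFint, hG]
    unfold bWfun
    ring
  have hbint : IntegrableOn (fun t : ℝ => (2:ℝ) ^ κ * n * (t ^ 3)⁻¹) (Set.Ioi w) := by
    refine Integrable.const_mul ?_ _
    refine (integrableOn_Ioi_rpow_of_lt (by norm_num : (-3:ℝ) < -1) hw0).congr_fun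
      (fun t htw => ?_) measurableSet_Ioi
    have ht0 : (0:ℝ) < t := lt_trans hw0 htw
    beta_reduce; rw [show (-3:ℝ) = ((-3 : ℤ) : ℝ) by norm_num, Real.rpow_intCast, BWAux.zpow_neg_three]
  have habs : |bWfun κ w + (2 : ℝ) ^ (κ - 2) / w| ≤
      ∫ t in Set.Ioi w, (2:ℝ) ^ κ * n * (t ^ 3)⁻¹ := by
    rw [key, ← Real.norm_eq_abs]
    refine norm_integral_le_of_norm_le hbint ?_
    filter_upwards [ae_restrict_mem measurableSet_Ioi] with t htw
    have htT : 2 * n + 2 ≤ t := le_trans hw (le_of_lt htw)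
    rw [Real.norm_eq_abs, abs_sub_comm]
    exact BWAux.F_est κ htT
  have hval : ∫ t in Set.Ioi w, (2:ℝ) ^ κ * n * (t ^ 3)⁻¹
      = (2:ℝ) ^ κ * n * ((w ^ 2)⁻¹ / 2) := by
    rw [MeasureTheory.integral_const_mul, BWAux.integral_inv_cube hw0]
  rw [hval] at habs
  rw [abs_mul, abs_of_nonneg (by positivity : (0:ℝ) ≤ w ^ 2)]
  calc |bWfun κ w + (2 : ℝ) ^ (κ - 2) / w| * w ^ 2
      ≤ (2:ℝ) ^ κ * n * ((w ^ 2)⁻¹ / 2) * w ^ 2 := by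
        have : (0:ℝ) ≤ w ^ 2 := by positivity
        exact mul_le_mul_of_nonneg_right habs this
    _ = (2:ℝ) ^ κ * n / 2 := by
        field_simp
end

section
/- Let ζ ∈ ℍ, let κ, m ∈ ℤ, and let g : (0,1) → ℝ be differentiable. Define f : {z ∈ ℍ : z ≠ ζ} → ℂ by f(z) := ((z−ζ̄)/(2√(Im ζ)))^{−κ} · g(r_ζ(z)) · X_ζ(z)^m, where X_ζ(z) := (z−ζ)/(z−ζ̄) and r_ζ(z) := |X_ζ(z)|. Then for every z = x+iy ∈ ℍ with z ≠ ζ one has 2i y^κ · conj( (1/2)(∂f/∂x + i ∂f/∂y)(z) ) = −(1/2)·((z−ζ̄)/(2√(Im ζ)))^{κ−2} · (1−r_ζ(z)²)^κ · r_ζ(z)^{2m+1} · g′(r_ζ(z)) · X_ζ(z)^{−m−1}. -/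
open Complex

/-- `X_ζ(z) := (z−ζ̄)/(z−ζ̄)` elliptic coordinate. -/
noncomputable def Xell (ζ z : ℂ) : ℂ := (z - ζ) / (z - (starRingEnd ℂ) ζ)

/-- `r_ζ(z) := |X_ζ(z)|`. -/
noncomputable def rell (ζ z : ℂ) : ℝ := ‖Xell ζ z‖

set_option maxHeartbeats 1000000

/-- Lemma 5.2 (1): for `f(z) = ((z−ζ̄)/(2√Im ζ))^{−κ} g(r_ζ(z)) X_ζ(z)^m` with `g`
differentiable on `(0,1)`, one has
`ξ_κ(f)(z) = −(1/2)((z−ζ̄)/(2√Im ζ))^{κ−2} (1−r_ζ(z)²)^κ r_ζ(z)^{2m+1} g′(r_ζ(z)) X_ζ(z)^{−m−1}`,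
where `ξ_κ = 2i y^κ conj((1/2)(∂/∂x + i ∂/∂y))`. -/
theorem xi_elliptic (ζ : ℂ) (hζ : 0 < ζ.im) (κ m : ℤ) (g g' : ℝ → ℝ)
    (hg : ∀ r ∈ Set.Ioo (0 : ℝ) 1, HasDerivAt g (g' r) r)
    (f : ℂ → ℂ)
    (hf : ∀ z : ℂ, f z = ((z - (starRingEnd ℂ) ζ) / (2 * (Real.sqrt ζ.im : ℂ))) ^ (-κ) *
      (g (rell ζ z) : ℂ) * Xell ζ z ^ m)
    (z : ℂ) (hz : 0 < z.im) (hne : z ≠ ζ) :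
    2 * Complex.I * (z.im : ℂ) ^ κ *
        (starRingEnd ℂ) ((1 / 2) * (fderiv ℝ f z 1 + Complex.I * fderiv ℝ f z Complex.I)) =
      -(1 / 2) * ((z - (starRingEnd ℂ) ζ) / (2 * (Real.sqrt ζ.im : ℂ))) ^ (κ - 2) *
        ((1 - rell ζ z ^ 2 : ℝ) : ℂ) ^ κ * ((rell ζ z : ℝ) : ℂ) ^ (2 * m + 1) *
        (g' (rell ζ z) : ℂ) * Xell ζ z ^ (-m - 1) := by
  set c : ℂ := (starRingEnd ℂ) ζ with hc
  set s : ℂ := 2 * (Real.sqrt ζ.im : ℂ) with hs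
  have hsrt : (0:ℝ) < Real.sqrt ζ.im := Real.sqrt_pos.2 hζ
  have hsne : s ≠ 0 := by
    simp only [hs, mul_ne_zero_iff, Ne, Complex.ofReal_eq_zero]
    exact ⟨two_ne_zero, ne_of_gt hsrt⟩
  have hzc : z - c ≠ 0 := by
    intro h
    have h2 := congrArg Complex.im h
    simp [hc, Complex.sub_im, Complex.conj_im] at h2
    linarith
  have hzζ : z - ζ ≠ 0 := sub_ne_zero.2 hne
  have hx0 : Xell ζ z ≠ 0 := div_ne_zero hzζ hzc
  have ha0 : (z - c)/s ≠ 0 := div_ne_zero hzc hsne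
  have key : Complex.normSq (z - c) - Complex.normSq (z - ζ) = 4 * z.im * ζ.im := by
    simp [Complex.normSq_apply, hc, Complex.sub_re, Complex.sub_im]
    ring
  set r := rell ζ z with hr
  have hrpos : 0 < r := norm_pos_iff.2 hx0
  have hrsq : r^2 = Complex.normSq (Xell ζ z) := Complex.sq_norm _
  have hnsq_zc : 0 < Complex.normSq (z - c) := Complex.normSq_pos.2 hzc
  have hr1 : r < 1 := by
    have h2 : r^2 < 1 := by
      rw [hrsq]
      unfold Xell
      rw [← hc, Complex.normSq_div, div_lt_one hnsq_zc]
      nlinarith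
    nlinarith
  -- derivatives
  set dX : ℂ := ((2*ζ.im : ℝ) : ℂ) * Complex.I / (z-c)^2 with hdX
  have hX : HasDerivAt (fun w => Xell ζ w) dX z := by
    have h := (((hasDerivAt_id z).sub_const ζ).div ((hasDerivAt_id z).sub_const c) hzc)
    refine h.congr_deriv ?_
    simp only [id_eq]
    rw [hdX, ← Complex.sub_conj, hc]
    ring
  have hA : HasDerivAt (fun w => (w - c)/s) (1/s) z := ((hasDerivAt_id z).sub_const c).div_const s
  have hA1 : HasDerivAt (fun w => ((w - c)/s)^(-κ)) (((-κ : ℂ) * ((z-c)/s)^(-κ-1)) * (1/s)) z := by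
    have h := (hasDerivAt_zpow (-κ) ((z-c)/s) (Or.inl ha0)).comp z hA
    refine h.congr_deriv ?_
    push_cast
    ring
  have hXm : HasDerivAt (fun w => Xell ζ w ^ m) (((m:ℂ) * (Xell ζ z)^(m-1)) * dX) z := by
    have h := (hasDerivAt_zpow m (Xell ζ z) (Or.inl hx0)).comp z hX
    exact h
  -- real fderivs
  have hXf : HasFDerivAt (fun w => Xell ζ w)
      ((ContinuousLinearMap.smulRight (1:ℂ→L[ℂ]ℂ) dX).restrictScalars ℝ) z :=
    hX.hasFDerivAt.restrictScalars ℝ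
  set T : ℂ →L[ℝ] ℂ := (ContinuousLinearMap.smulRight (1:ℂ→L[ℂ]ℂ) dX).restrictScalars ℝ with hT
  have hN : HasFDerivAt (fun w => ‖Xell ζ w‖^2) (2 • (innerSL ℝ (Xell ζ z)).comp T) z := hXf.norm_sq
  have hrnz : ‖Xell ζ z‖^2 ≠ 0 := by
    have : ‖Xell ζ z‖ ≠ 0 := norm_ne_zero_iff.2 hx0
    positivity
  have hrf0 := (Real.hasDerivAt_sqrt hrnz).comp_hasFDerivAt z hN
  have hrfun : Real.sqrt ∘ (fun w => ‖Xell ζ w‖^2) = fun w => rell ζ w := by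
    funext w
    simp [Function.comp, Real.sqrt_sq (norm_nonneg _), rell]
  rw [hrfun] at hrf0
  have hrval : Real.sqrt (‖Xell ζ z‖ ^ 2) = r := by
    rw [Real.sqrt_sq (norm_nonneg _)]
    simp [hr, rell]
  rw [hrval] at hrf0
  have hgr : HasDerivAt g (g' r) (rell ζ z) := hg r ⟨hrpos, hr1⟩
  have hgf := hgr.comp_hasFDerivAt z hrf0
  have hGf : HasFDerivAt (fun w => ((g (rell ζ w)) : ℂ))
      (Complex.ofRealCLM.comp ((g' r) • ((1/(2*r)) • (2 • (innerSL ℝ (Xell ζ z)).comp T)))) z :=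
    Complex.ofRealCLM.hasFDerivAt.comp z hgf
  have hA1f : HasFDerivAt (fun w => ((w - c)/s)^(-κ))
      ((ContinuousLinearMap.smulRight (1:ℂ→L[ℂ]ℂ) (((-κ : ℂ) * ((z-c)/s)^(-κ-1)) * (1/s))).restrictScalars ℝ) z :=
    hA1.hasFDerivAt.restrictScalars ℝ
  have hXmf : HasFDerivAt (fun w => Xell ζ w ^ m)
      ((ContinuousLinearMap.smulRight (1:ℂ→L[ℂ]ℂ) (((m:ℂ) * (Xell ζ z)^(m-1)) * dX)).restrictScalars ℝ) z :=
    hXm.hasFDerivAt.restrictScalars ℝ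
  have hP := (hA1f.mul hGf).mul hXmf
  have heq : f =ᶠ[nhds z] (fun w => ((w - c)/s)^(-κ) * ((g (rell ζ w)) : ℂ) * Xell ζ w ^ m) :=
    Filter.Eventually.of_forall fun w => hf w
  have hfP := hP.congr_of_eventuallyEq heq
  have hfd := hfP.fderiv
  have hreC : ∀ w : ℂ, ((w.re : ℝ) : ℂ) = (w + (starRingEnd ℂ) w)/2 := fun w => by
    rw [Complex.add_conj]; push_cast; ring
  have hkey2 : (1/2 : ℂ) * (fderiv ℝ f z 1 + Complex.I * fderiv ℝ f z Complex.I) =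
      ((z-c)/s)^(-κ) * Xell ζ z^m * ((g' r : ℝ):ℂ) *
        (Xell ζ z * (starRingEnd ℂ) dX) / (2*(r:ℂ)) := by
    rw [hfd]
    simp only [ContinuousLinearMap.add_apply, ContinuousLinearMap.coe_smul', Pi.smul_apply,
      ContinuousLinearMap.coe_comp', Function.comp_apply, ContinuousLinearMap.coe_restrictScalars',
      ContinuousLinearMap.smulRight_apply, ContinuousLinearMap.one_apply, smul_eq_mul, one_mul, Pi.mul_apply,
      Complex.ofRealCLM_apply, ContinuousLinearMap.smul_apply, innerSL_apply_apply, Complex.inner,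
      Complex.real_smul, hT]
    simp only [nsmul_eq_mul, Pi.smul_apply, smul_eq_mul]
    push_cast [hreC]
    simp only [map_mul, Complex.conj_conj, Complex.conj_I]
    have hrC : (r:ℂ) ≠ 0 := Complex.ofReal_ne_zero.2 (ne_of_gt hrpos)
    field_simp
    ring_nf
    have h3 : Complex.I^3 = -Complex.I := by
      rw [pow_succ, Complex.I_sq]; ring
    simp only [h3, Complex.I_sq]
    ring
  rw [hkey2]
  simp only [map_mul, map_div₀, map_zpow₀, Complex.conj_conj, Complex.conj_ofReal, map_ofNat,
    map_sub]
  have hconjs : (starRingEnd ℂ) s = s := by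
    rw [hs, map_mul, Complex.conj_ofReal, map_ofNat]
  have hconjc : (starRingEnd ℂ) c = ζ := by rw [hc]; simp
  rw [hconjs, hconjc]
  have hrC : (r:ℂ) ≠ 0 := Complex.ofReal_ne_zero.2 (ne_of_gt hrpos)
  have hBconj : ((starRingEnd ℂ) z - ζ) = (starRingEnd ℂ) (z - c) := by rw [hc]; simp
  have hB0 : (starRingEnd ℂ) z - ζ ≠ 0 := by
    rw [hBconj]; exact (map_ne_zero (starRingEnd ℂ)).mpr hzc
  have hBs0 : ((starRingEnd ℂ) z - ζ)/s ≠ 0 := div_ne_zero hB0 hsne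
  have hss : s * s = ((4*ζ.im : ℝ) : ℂ) := by
    rw [hs]
    push_cast
    rw [show (2:ℂ) * ↑(Real.sqrt ζ.im) * (2 * ↑(Real.sqrt ζ.im)) =
      4 * (↑(Real.sqrt ζ.im) * ↑(Real.sqrt ζ.im)) by ring]
    norm_cast
    rw [Real.mul_self_sqrt hζ.le]
    push_cast
    ring
  have keyr : z.im * (4*ζ.im) = (1 - r^2) * Complex.normSq (z - c) := by
    have hrr : r^2 = Complex.normSq (z - ζ) / Complex.normSq (z - c) := by
      rw [hrsq]; unfold Xell; rw [← hc, Complex.normSq_div]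
    rw [hrr, sub_mul, one_mul, div_mul_cancel₀ _ (ne_of_gt hnsq_zc)]
    linarith [key]
  have hidA : (↑z.im:ℂ) = ((1 - r^2 : ℝ):ℂ) * (((z-c)/s) * (((starRingEnd ℂ) z - ζ)/s)) := by
    rw [hBconj, div_mul_div_comm, Complex.mul_conj, hss, ← Complex.ofReal_div,
      ← Complex.ofReal_mul]
    rw [Complex.ofReal_inj]
    have h4 : (4*ζ.im : ℝ) ≠ 0 := by positivity
    field_simp
    linarith [keyr]
  -- combine z.im^κ with (B/s)^(-κ)
  have him : (↑z.im:ℂ)^κ * (((starRingEnd ℂ) z - ζ)/s)^(-κ) =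
      ((1 - r^2 : ℝ):ℂ)^κ * ((z-c)/s)^κ := by
    rw [hidA, mul_zpow, mul_zpow, mul_assoc, mul_assoc, ← zpow_add₀ hBs0]
    simp
  have hcx0 : (starRingEnd ℂ) (Xell ζ z) ≠ 0 := (map_ne_zero (starRingEnd ℂ)).mpr hx0
  have hconjx : (starRingEnd ℂ) (Xell ζ z) = ((r:ℂ))^(2:ℤ) * Xell ζ z^(-1:ℤ) := by
    have h := Complex.mul_conj (Xell ζ z)
    have h2 : ((Complex.normSq (Xell ζ z) : ℝ) : ℂ) = ((r:ℂ))^(2:ℤ) := by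
      rw [← hrsq, show ((2:ℤ)) = ((2:ℕ):ℤ) from rfl, zpow_natCast]; push_cast; ring
    rw [zpow_neg_one]
    field_simp [hx0] at h ⊢
    rw [h, h2]
    exact zpow_natCast _ 2
  have hcxfull : (starRingEnd ℂ) (Xell ζ z) ^ m * (starRingEnd ℂ) (Xell ζ z) =
      ((r:ℂ))^(2*m+2) * Xell ζ z^(-m-1) := by
    rw [← zpow_add_one₀ hcx0, hconjx, mul_zpow, ← zpow_mul, ← zpow_mul]
    rw [show (2*(m+1):ℤ) = 2*m+2 from by ring, show ((-1)*(m+1):ℤ) = -m-1 from by ring]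
  have hIdX : Complex.I * dX = -(s*s)/(2*(z-c)^2) := by
    rw [hdX, hss]
    have h4 : ((4*ζ.im:ℝ):ℂ) = 2 * ((2*ζ.im:ℝ):ℂ) := by push_cast; ring
    rw [h4]
    field_simp
    ring_nf
    simp only [Complex.I_sq]
    ring
  have him' : (↑z.im:ℂ)^κ = ((1 - r^2 : ℝ):ℂ)^κ * ((z-c)/s)^κ * (((starRingEnd ℂ) z - ζ)/s)^κ := by
    rw [hidA, mul_zpow, mul_zpow, mul_assoc]
  have haκ : ((z-c)/s)^(κ-2) = ((z-c)/s)^κ * (s*s)/((z-c)*(z-c)) := by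
    rw [zpow_sub₀ ha0, show (2:ℤ) = ((2:ℕ):ℤ) from rfl, zpow_natCast, div_pow]
    field_simp
  have hrbig : ((r:ℂ))^(2*m+2) = ((r:ℂ))^(2*m+1) * (r:ℂ) := by
    rw [show (2*m+2:ℤ) = (2*m+1)+1 from by ring, zpow_add_one₀ hrC]
  have hBcan : (((starRingEnd ℂ) z - ζ)/s)^κ * (((starRingEnd ℂ) z - ζ)/s)^(-κ) = 1 := by
    rw [← zpow_add₀ hBs0]
    simp
  calc 2 * Complex.I * (↑z.im:ℂ) ^ κ *
      ((((starRingEnd ℂ) z - ζ) / s) ^ (-κ) * (starRingEnd ℂ) (Xell ζ z) ^ m * ↑(g' r) *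
          ((starRingEnd ℂ) (Xell ζ z) * dX) /
        (2 * ↑r))
      = (↑z.im:ℂ)^κ * ((((starRingEnd ℂ) z - ζ) / s) ^ (-κ)) *
          ((starRingEnd ℂ) (Xell ζ z) ^ m * (starRingEnd ℂ) (Xell ζ z)) * ↑(g' r) *
          (Complex.I * dX) / (↑r:ℂ) := by
        ring
    _ = ((1 - r^2 : ℝ):ℂ)^κ * ((z-c)/s)^κ *
          ((((starRingEnd ℂ) z - ζ)/s)^κ * (((starRingEnd ℂ) z - ζ)/s)^(-κ)) *
          (((r:ℂ))^(2*m+1) * (r:ℂ) * Xell ζ z^(-m-1)) * ↑(g' r) *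
          (-(s*s)/(2*(z-c)^2)) / (↑r:ℂ) := by
        rw [him', hcxfull, hIdX, hrbig]; ring
    _ = -(1 / 2) * (((z-c)/s)^κ * (s*s)/((z-c)*(z-c))) * ((1 - r^2 : ℝ):ℂ)^κ *
          ((r:ℂ))^(2*m+1) * ↑(g' r) * Xell ζ z^(-m-1) := by
        rw [hBcan]
        generalize ((z-c)/s)^κ = U
        generalize ((1 - r^2 : ℝ):ℂ)^κ = T
        generalize ((r:ℂ))^(2*m+1) = Rb
        generalize Xell ζ z^(-m-1) = Xm
        field_simp
    _ = -(1 / 2) * ((z - c) / s) ^ (κ - 2) * ((1 - r ^ 2:ℝ):ℂ) ^ κ * (↑r:ℂ) ^ (2 * m + 1) *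
          ↑(g' r) * Xell ζ z ^ (-m - 1) := by
        rw [haκ]
end

section
/- Let ζ ∈ ℍ and define h : ℍ → ℝ by h(z) := 1 + |z−ζ|²/(2·Im(z)·Im(ζ)). Then for every z ∈ ℍ with z ≠ ζ one has 2i · conj( (1/2)(∂h/∂x + i ∂h/∂y)(z) ) = −2·((z−ζ̄)/(2√(Im ζ)))^{−2} · ( r_ζ(z)²/(1−r_ζ(z)²)² ) · X_ζ(z)^{−1}, where X_ζ(z) := (z−ζ)/(z−ζ̄) and r_ζ(z) := |X_ζ(z)|. -/
open Complex

private lemma xi_alg_aux (u w cu cw y b : ℂ) (hu : u ≠ 0) (hw : w ≠ 0)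
    (hy : y ≠ 0) (hb : b ≠ 0) :
    -2 * (4 * b / w ^ 2) * (u * cu * (w * cw) / (16 * y ^ 2 * b ^ 2)) * (w / u)
      = -(cu * cw) / (2 * y ^ 2 * b) := by
  rw [show -2 * (4 * b / w ^ 2) * (u * cu * (w * cw) / (16 * y ^ 2 * b ^ 2)) * (w / u)
      = (-2 * (4 * b) * (u * cu * (w * cw)) * w) / (w ^ 2 * (16 * y ^ 2 * b ^ 2) * u) by
    field_simp]
  rw [div_eq_div_iff (by simp [hw, hu, hy, hb]) (by simp [hy, hb])]
  ring

/-- The computation (eqn:xicoshr): for `h(z) = 1 + |z−ζ|²/(2 Im z Im ζ)`,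
`ξ₀(h)(z) = −2((z−ζ̄)/(2√Im ζ))^{−2} (r_ζ(z)²/(1−r_ζ(z)²)²) X_ζ(z)^{−1}`, where
`ξ₀ = 2i conj((1/2)(∂/∂x + i ∂/∂y))`. -/
theorem xi_cosh_dist (ζ : ℂ) (hζ : 0 < ζ.im) (h : ℂ → ℂ)
    (hh : ∀ z : ℂ, h z = 1 + ((‖z - ζ‖ ^ 2 / (2 * z.im * ζ.im) : ℝ) : ℂ))
    (z : ℂ) (hz : 0 < z.im) (hne : z ≠ ζ) :
    2 * Complex.I *
        (starRingEnd ℂ) ((1 / 2) * (fderiv ℝ h z 1 + Complex.I * fderiv ℝ h z Complex.I)) =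
      -2 * ((z - (starRingEnd ℂ) ζ) / (2 * (Real.sqrt ζ.im : ℂ))) ^ (-2 : ℤ) *
        ((rell ζ z ^ 2 / (1 - rell ζ z ^ 2) ^ 2 : ℝ) : ℂ) * (Xell ζ z) ^ (-1 : ℤ) := by
  -- nonvanishing facts
  have hu : z - ζ ≠ 0 := sub_ne_zero.mpr hne
  have hw : z - (starRingEnd ℂ) ζ ≠ 0 := by
    intro H
    have h2 : (z - (starRingEnd ℂ) ζ).im = z.im + ζ.im := by simp
    rw [H] at h2
    simp at h2
    linarith
  have hyR : z.im ≠ 0 := hz.ne'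
  have hbR : ζ.im ≠ 0 := hζ.ne'
  have hy : (z.im:ℂ) ≠ 0 := by exact_mod_cast hyR
  have hb : (ζ.im:ℂ) ≠ 0 := by exact_mod_cast hbR
  have hs : ((Real.sqrt ζ.im : ℝ):ℂ) ^ 2 = (ζ.im:ℂ) := by
    rw [← Complex.ofReal_pow, Real.sq_sqrt hζ.le]
  -- the derivative of h
  have h1 : HasFDerivAt (fun w : ℂ => w.re - ζ.re) Complex.reCLM z :=
    (Complex.reCLM.hasFDerivAt).sub_const ζ.re
  have h2 : HasFDerivAt (fun w : ℂ => w.im - ζ.im) Complex.imCLM z :=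
    (Complex.imCLM.hasFDerivAt).sub_const ζ.im
  have hN := (h1.mul h1).add (h2.mul h2)
  have hD := ((Complex.imCLM.hasFDerivAt (x := z)).const_mul (2:ℝ)).mul_const ζ.im
  have hD0 : 2 * z.im * ζ.im ≠ 0 := by positivity
  have hinv := (hasDerivAt_inv hD0).comp_hasFDerivAt z hD
  have hg := hN.mul hinv
  have hH := ((Complex.ofRealCLM.hasFDerivAt).comp z hg).const_add (1:ℂ)
  have hfd := hH.fderiv
  have hfun : (fun x : ℂ =>
      1 + (⇑Complex.ofRealCLM ∘
          ((((fun w : ℂ => w.re - ζ.re) * fun w : ℂ => w.re - ζ.re) +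
            (fun w : ℂ => w.im - ζ.im) * fun w : ℂ => w.im - ζ.im) *
            (fun t : ℝ => t⁻¹) ∘ fun y : ℂ => 2 * Complex.imCLM y * ζ.im)) x) = h := by
    funext w
    rw [hh w]
    simp only [Complex.ofRealCLM_apply, Function.comp, Complex.imCLM_apply, Pi.mul_apply,
      Pi.add_apply]
    congr 1
    rw [Complex.sq_norm, Complex.normSq_apply, Complex.sub_re, Complex.sub_im, div_eq_mul_inv]
  rw [hfun] at hfd
  -- values of the derivative
  have e1 : fderiv ℝ h z 1 = (((z.re - ζ.re) / (z.im * ζ.im) : ℝ) : ℂ) := by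
    rw [hfd]
    simp only [ContinuousLinearMap.comp_apply, ContinuousLinearMap.add_apply,
      ContinuousLinearMap.smul_apply, ContinuousLinearMap.coe_smul', Pi.smul_apply,
      Complex.imCLM_apply, Complex.reCLM_apply, Complex.ofRealCLM_apply,
      Complex.one_re, Complex.one_im, Complex.I_re, Complex.I_im, Function.comp,
      smul_eq_mul]
    norm_cast
    field_simp
    ring
  have e2 : fderiv ℝ h z Complex.I
      = (((z.im^2 - ζ.im^2 - (z.re - ζ.re)^2) / (2 * z.im^2 * ζ.im) : ℝ) : ℂ) := by
    rw [hfd]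
    simp only [ContinuousLinearMap.comp_apply, ContinuousLinearMap.add_apply,
      ContinuousLinearMap.smul_apply, ContinuousLinearMap.coe_smul', Pi.smul_apply,
      Complex.imCLM_apply, Complex.reCLM_apply, Complex.ofRealCLM_apply,
      Complex.one_re, Complex.one_im, Complex.I_re, Complex.I_im, Function.comp,
      smul_eq_mul, Pi.mul_apply, Pi.add_apply]
    norm_cast
    field_simp
    ring
  rw [e1, e2]
  -- the middle quantity
  set M : ℂ := -((starRingEnd ℂ) (z - ζ) * (starRingEnd ℂ) (z - (starRingEnd ℂ) ζ)) /
      (2 * (z.im:ℂ)^2 * (ζ.im:ℂ)) with hM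
  have hden : (2 * (z.im:ℂ)^2 * ζ.im) ≠ 0 := by simp [hy, hb]
  -- LHS equals M
  have hLHS : 2 * Complex.I * (starRingEnd ℂ) ((1 / 2) *
      ((((z.re - ζ.re) / (z.im * ζ.im) : ℝ) : ℂ) +
        Complex.I * (((z.im^2 - ζ.im^2 - (z.re - ζ.re)^2) / (2 * z.im^2 * ζ.im) : ℝ) : ℂ))) = M := by
    have keyC : (((z.im^2 - ζ.im^2 - (z.re - ζ.re)^2 : ℝ)):ℂ)
        + Complex.I * ((2 * z.im * (z.re - ζ.re) : ℝ):ℂ)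
        = -((starRingEnd ℂ) (z - ζ) * (starRingEnd ℂ) (z - (starRingEnd ℂ) ζ)) := by
      apply Complex.ext <;>
        simp [Complex.mul_re, Complex.mul_im, Complex.sub_re, Complex.sub_im,
          ← Complex.ofReal_pow] <;> ring
    rw [hM, ← keyC]
    simp only [map_mul, map_add, map_div₀, map_one, map_ofNat, Complex.conj_ofReal,
      Complex.conj_I]
    apply mul_right_cancel₀ hden
    push_cast
    field_simp
    ring_nf
    simp only [Complex.I_sq]
    ring
  rw [hLHS]
  -- RHS equals M
  have hpow : ((z - (starRingEnd ℂ) ζ) / (2 * (Real.sqrt ζ.im : ℂ))) ^ (-2 : ℤ)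
      = 4 * (ζ.im:ℂ) / (z - (starRingEnd ℂ) ζ)^2 := by
    rw [zpow_neg, show ((2:ℤ)) = ((2:ℕ):ℤ) from rfl, zpow_natCast, div_pow, inv_div,
      mul_pow, hs]
    norm_num
  have hNw0 : Complex.normSq (z - (starRingEnd ℂ) ζ) ≠ 0 := (Complex.normSq_pos.mpr hw).ne'
  have hr2 : rell ζ z ^ 2
      = Complex.normSq (z - ζ) / Complex.normSq (z - (starRingEnd ℂ) ζ) := by
    rw [rell, Xell, norm_div, div_pow, Complex.sq_norm, Complex.sq_norm]
  have hNw : Complex.normSq (z - (starRingEnd ℂ) ζ) - Complex.normSq (z - ζ)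
      = 4 * z.im * ζ.im := by
    simp [Complex.normSq_apply, Complex.sub_re, Complex.sub_im]
    ring
  have h1mr : 1 - rell ζ z ^ 2
      = 4 * z.im * ζ.im / Complex.normSq (z - (starRingEnd ℂ) ζ) := by
    rw [hr2, eq_div_iff hNw0, sub_mul, one_mul, div_mul_cancel₀ _ hNw0]
    linarith [hNw]
  have hcast : (rell ζ z ^ 2 / (1 - rell ζ z ^ 2) ^ 2 : ℝ)
      = Complex.normSq (z - ζ) * Complex.normSq (z - (starRingEnd ℂ) ζ)
        / (16 * z.im^2 * ζ.im^2) := by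
    rw [h1mr, hr2]
    field_simp
    ring
  rw [hpow, Xell, zpow_neg, zpow_one, inv_div, hcast, hM]
  push_cast
  rw [← Complex.mul_conj, ← Complex.mul_conj]
  exact (xi_alg_aux (z - ζ) (z - (starRingEnd ℂ) ζ) ((starRingEnd ℂ) (z - ζ))
    ((starRingEnd ℂ) (z - (starRingEnd ℂ) ζ)) (z.im:ℂ) (ζ.im:ℂ) hu hw hy hb).symm
end
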